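/- arXiv:2109.09079 — 6 statements merged into one kernel-verified Lean document; each statement's English description precedes it below -/
import Mathlib

section
/- The state error covariance update map ρ of the optimal unknown-input filter is monotone with respect to the Loewner order: for all positive semidefinite matrices Σ₁, Σ₂ with Σ₁ ⪯ Σ₂, one has ρ(Σ₁) ⪯ ρ(Σ₂). -/
open Matrix BigOperators

noncomputable section

/-- `R̃(Σ) = C (A Σ Aᵀ + Q) Cᵀ + R`. -/
def Rt {ny nz : ℕ} (A Q : Matrix (Fin ny) (Fin ny) ℝ)
    (C : Matrix (Fin nz) (Fin ny) ℝ) (R : Matrix (Fin nz) (Fin nz) ℝ)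
    (S : Matrix (Fin ny) (Fin ny) ℝ) : Matrix (Fin nz) (Fin nz) ℝ :=
  C * (A * S * Aᵀ + Q) * Cᵀ + R

/-- Optimal unknown-input filter gain `M(Σ)`. -/
def Mg {ny nz nd : ℕ} (A Q : Matrix (Fin ny) (Fin ny) ℝ) (G : Matrix (Fin ny) (Fin nd) ℝ)
    (C : Matrix (Fin nz) (Fin ny) ℝ) (R : Matrix (Fin nz) (Fin nz) ℝ)
    (S : Matrix (Fin ny) (Fin ny) ℝ) : Matrix (Fin nd) (Fin nz) ℝ :=
  ((C * G)ᵀ * (Rt A Q C R S)⁻¹ * (C * G))⁻¹ * (C * G)ᵀ * (Rt A Q C R S)⁻¹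

/-- Optimal state filter gain `K(Σ)`. -/
def Kg {ny nz : ℕ} (A Q : Matrix (Fin ny) (Fin ny) ℝ)
    (C : Matrix (Fin nz) (Fin ny) ℝ) (R : Matrix (Fin nz) (Fin nz) ℝ)
    (S : Matrix (Fin ny) (Fin ny) ℝ) : Matrix (Fin ny) (Fin nz) ℝ :=
  (A * S * Aᵀ + Q) * Cᵀ * (Rt A Q C R S)⁻¹

/-- Closed loop matrix `Ã(Σ)`. -/
def Atil {ny nz nd : ℕ} (A Q : Matrix (Fin ny) (Fin ny) ℝ) (G : Matrix (Fin ny) (Fin nd) ℝ)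
    (C : Matrix (Fin nz) (Fin ny) ℝ) (R : Matrix (Fin nz) (Fin nz) ℝ)
    (S : Matrix (Fin ny) (Fin ny) ℝ) : Matrix (Fin ny) (Fin ny) ℝ :=
  (1 - Kg A Q C R S * C) * (1 - G * Mg A Q G C R S * C) * A

/-- `F̃(Σ)`. -/
def Ftil {ny nz nd : ℕ} (A Q : Matrix (Fin ny) (Fin ny) ℝ) (G : Matrix (Fin ny) (Fin nd) ℝ)
    (C : Matrix (Fin nz) (Fin ny) ℝ) (R : Matrix (Fin nz) (Fin nz) ℝ)
    (S : Matrix (Fin ny) (Fin ny) ℝ) : Matrix (Fin ny) (Fin ny) ℝ :=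
  -((1 - Kg A Q C R S * C) * (1 - G * Mg A Q G C R S * C))

/-- `W̃(Σ)`. -/
def Wtil {ny nz nd : ℕ} (A Q : Matrix (Fin ny) (Fin ny) ℝ) (G : Matrix (Fin ny) (Fin nd) ℝ)
    (C : Matrix (Fin nz) (Fin ny) ℝ) (R : Matrix (Fin nz) (Fin nz) ℝ)
    (S : Matrix (Fin ny) (Fin ny) ℝ) : Matrix (Fin ny) (Fin nz) ℝ :=
  G * Mg A Q G C R S - Kg A Q C R S * C * G * Mg A Q G C R S + Kg A Q C R S

/-- The state error covariance update map `ρ(Σ)`. -/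
def rho {ny nz nd : ℕ} (A Q : Matrix (Fin ny) (Fin ny) ℝ) (G : Matrix (Fin ny) (Fin nd) ℝ)
    (C : Matrix (Fin nz) (Fin ny) ℝ) (R : Matrix (Fin nz) (Fin nz) ℝ)
    (S : Matrix (Fin ny) (Fin ny) ℝ) : Matrix (Fin ny) (Fin ny) ℝ :=
  Atil A Q G C R S * S * (Atil A Q G C R S)ᵀ
    + Ftil A Q G C R S * Q * (Ftil A Q G C R S)ᵀ
    + Wtil A Q G C R S * R * (Wtil A Q G C R S)ᵀ

/-- The unknown-input error covariance update map `ρᵈ(Σ)`. -/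
def rhod {ny nz nd : ℕ} (A Q : Matrix (Fin ny) (Fin ny) ℝ) (G : Matrix (Fin ny) (Fin nd) ℝ)
    (C : Matrix (Fin nz) (Fin ny) ℝ) (R : Matrix (Fin nz) (Fin nz) ℝ)
    (S : Matrix (Fin ny) (Fin ny) ℝ) : Matrix (Fin nd) (Fin nd) ℝ :=
  ((C * G)ᵀ * (Rt A Q C R S)⁻¹ * (C * G))⁻¹

lemma symm_of_psd {n : ℕ} {M : Matrix (Fin n) (Fin n) ℝ} (h : M.PosSemidef) : Mᵀ = M := by
  have := h.isHermitian.eq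
  rwa [Matrix.conjTranspose_eq_transpose_of_trivial] at this

lemma symm_of_pd {n : ℕ} {M : Matrix (Fin n) (Fin n) ℝ} (h : M.PosDef) : Mᵀ = M :=
  symm_of_psd h.posSemidef

lemma psd_conj {n m : ℕ} {M : Matrix (Fin n) (Fin n) ℝ} (h : M.PosSemidef)
    (B : Matrix (Fin m) (Fin n) ℝ) : (B * M * Bᵀ).PosSemidef := by
  have := h.mul_mul_conjTranspose_same B
  rwa [Matrix.conjTranspose_eq_transpose_of_trivial] at this

lemma full_rank_conj_posDef {nz nd : ℕ} {J : Matrix (Fin nz) (Fin nz) ℝ} (hJ : J.PosDef)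
    {F : Matrix (Fin nz) (Fin nd) ℝ} (hF : F.rank = nd) : (Fᵀ * J * F).PosDef := by
  have hker : LinearMap.ker F.mulVecLin = ⊥ := by
    have h := F.mulVecLin.finrank_range_add_finrank_ker
    rw [Module.finrank_fintype_fun_eq_card, Fintype.card_fin] at h
    have hrk : Module.finrank ℝ (LinearMap.range F.mulVecLin) = nd := hF
    rw [hrk] at h
    have h0 : Module.finrank ℝ (LinearMap.ker F.mulVecLin) = 0 := by omega
    exact Submodule.finrank_eq_zero.mp h0
  refine Matrix.PosDef.of_dotProduct_mulVec_pos ?_ ?_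
  · show (Fᵀ * J * F)ᴴ = Fᵀ * J * F
    rw [Matrix.conjTranspose_eq_transpose_of_trivial, Matrix.transpose_mul, Matrix.transpose_mul,
      Matrix.transpose_transpose, symm_of_pd hJ, Matrix.mul_assoc]
  · intro x hx
    have hFx : F *ᵥ x ≠ 0 := by
      intro h0
      apply hx
      have hm : x ∈ LinearMap.ker F.mulVecLin := by
        simpa [LinearMap.mem_ker, Matrix.mulVecLin_apply] using h0
      rw [hker, Submodule.mem_bot] at hm
      exact hm
    have := hJ.dotProduct_mulVec_pos hFx
    simpa [Matrix.dotProduct_mulVec, Matrix.vecMul_transpose, ← Matrix.mulVec_mulVec,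
      Matrix.mul_assoc] using this

lemma Rt_posDef {ny nz : ℕ} {A Q : Matrix (Fin ny) (Fin ny) ℝ}
    {C : Matrix (Fin nz) (Fin ny) ℝ} {R : Matrix (Fin nz) (Fin nz) ℝ}
    {S : Matrix (Fin ny) (Fin ny) ℝ} (hQ : Q.PosDef) (hR : R.PosDef)
    (hS : S.PosSemidef) : (Rt A Q C R S).PosDef := by
  unfold Rt
  have h1 : (A * S * Aᵀ).PosSemidef := psd_conj hS A
  have h2 : (A * S * Aᵀ + Q).PosSemidef := h1.add hQ.posSemidef
  have h3 : (C * (A * S * Aᵀ + Q) * Cᵀ).PosSemidef := psd_conj h2 C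
  exact Matrix.PosDef.posSemidef_add h3 hR


/-- the state error covariance update map `ρ` is monotone w.r.t. the
Loewner order: if `Σ₁ ⪯ Σ₂` (both PSD) then `ρ(Σ₁) ⪯ ρ(Σ₂)`. -/
theorem state_update_monotone {ny nz nd : ℕ}
    (A Q : Matrix (Fin ny) (Fin ny) ℝ) (G : Matrix (Fin ny) (Fin nd) ℝ)
    (C : Matrix (Fin nz) (Fin ny) ℝ) (R : Matrix (Fin nz) (Fin nz) ℝ)
    (hQ : Q.PosDef) (hR : R.PosDef) (hF : (C * G).rank = nd)
    (S1 S2 : Matrix (Fin ny) (Fin ny) ℝ)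
    (h1 : S1.PosSemidef) (h2 : S2.PosSemidef) (hle : (S2 - S1).PosSemidef) :
    (rho A Q G C R S2 - rho A Q G C R S1).PosSemidef := by
  -- base symmetry facts
  have hS1t : S1ᵀ = S1 := symm_of_psd h1
  have hS2t : S2ᵀ = S2 := symm_of_psd h2
  have hQt : Qᵀ = Q := symm_of_pd hQ
  have hRt0 : Rᵀ = R := symm_of_pd hR
  -- positive definiteness
  have hRT1 : (Rt A Q C R S1).PosDef := Rt_posDef hQ hR h1
  have hRT2 : (Rt A Q C R S2).PosDef := Rt_posDef hQ hR h2
  -- abbreviations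
  set P1 := A * S1 * Aᵀ + Q with hP1def
  set P2 := A * S2 * Aᵀ + Q with hP2def
  set R1 := Rt A Q C R S1 with hR1def
  set R2 := Rt A Q C R S2 with hR2def
  set J1 := R1⁻¹ with hJ1def
  set J2 := R2⁻¹ with hJ2def
  set T1 := ((C * G)ᵀ * J1 * (C * G))⁻¹ with hT1def
  set T2 := ((C * G)ᵀ * J2 * (C * G))⁻¹ with hT2def
  set K1 := P1 * Cᵀ * J1 with hK1def
  set K2 := P2 * Cᵀ * J2 with hK2def
  set M1 := T1 * (C * G)ᵀ * J1 with hM1def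
  set M2 := T2 * (C * G)ᵀ * J2 with hM2def
  set L1 := G * M1 - K1 * C * G * M1 + K1 with hL1def
  set L2 := G * M2 - K2 * C * G * M2 + K2 with hL2def
  -- unit facts for R1, R2
  have hJ1R1 : J1 * R1 = 1 := by
    rw [hJ1def]; exact Matrix.nonsing_inv_mul _ hRT1.det_pos.ne'.isUnit
  have hR1J1 : R1 * J1 = 1 := by
    rw [hJ1def]; exact Matrix.mul_nonsing_inv _ hRT1.det_pos.ne'.isUnit
  have hR1t : R1ᵀ = R1 := symm_of_pd hRT1
  have hJ1t : J1ᵀ = J1 := by rw [hJ1def, Matrix.transpose_nonsing_inv, hR1t]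
  have hJ1PD : J1.PosDef := by rw [hJ1def]; exact hRT1.inv
  have hJ2PD : J2.PosDef := by rw [hJ2def]; exact hRT2.inv
  have hE1PD : ((C * G)ᵀ * J1 * (C * G)).PosDef := full_rank_conj_posDef hJ1PD hF
  have hE2PD : ((C * G)ᵀ * J2 * (C * G)).PosDef := full_rank_conj_posDef hJ2PD hF
  have hT1unit : T1 * ((C * G)ᵀ * J1 * (C * G)) = 1 := by
    rw [hT1def]; exact Matrix.nonsing_inv_mul _ hE1PD.det_pos.ne'.isUnit
  have hT2unit : T2 * ((C * G)ᵀ * J2 * (C * G)) = 1 := by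
    rw [hT2def]; exact Matrix.nonsing_inv_mul _ hE2PD.det_pos.ne'.isUnit
  have hT1t : T1ᵀ = T1 := by
    rw [hT1def, Matrix.transpose_nonsing_inv, symm_of_pd hE1PD]
  -- symmetry of P1
  have hP1t : P1ᵀ = P1 := by
    rw [hP1def]
    simp [Matrix.transpose_add, Matrix.transpose_mul, Matrix.transpose_transpose, hS1t, hQt,
      Matrix.mul_assoc]
  -- gain algebra
  have hM1F : M1 * (C * G) = 1 := by
    have h := hT1unit
    rw [hM1def]
    simp only [Matrix.mul_assoc] at h ⊢
    exact h
  have hM2F : M2 * (C * G) = 1 := by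
    have h := hT2unit
    rw [hM2def]
    simp only [Matrix.mul_assoc] at h ⊢
    exact h
  have hL1F : L1 * (C * G) = G := by
    rw [hL1def]
    simp only [Matrix.sub_mul, Matrix.add_mul, Matrix.mul_assoc, hM1F, Matrix.mul_one]
    abel
  have hL2F : L2 * (C * G) = G := by
    rw [hL2def]
    simp only [Matrix.sub_mul, Matrix.add_mul, Matrix.mul_assoc, hM2F, Matrix.mul_one]
    abel
  have hDF : (L2 - L1) * (C * G) = 0 := by
    rw [Matrix.sub_mul, hL1F, hL2F, sub_self]
  -- cross terms
  have hX1 : L1 - K1 = (G - K1 * (C * G)) * M1 := by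
    rw [hL1def]
    simp only [Matrix.sub_mul, Matrix.mul_assoc]
    abel
  have hM1t : M1ᵀ = J1 * ((C * G) * T1) := by
    rw [hM1def]
    simp only [Matrix.transpose_mul, Matrix.transpose_transpose, hJ1t, hT1t, Matrix.mul_assoc]
  have hcross : (L2 - L1) * (R1 * (L1 - K1)ᵀ) = 0 := by
    rw [hX1, Matrix.transpose_mul, hM1t]
    rw [Matrix.mul_assoc J1]
    rw [← Matrix.mul_assoc R1 J1, hR1J1, Matrix.one_mul]
    rw [Matrix.mul_assoc (C * G) T1]
    rw [← Matrix.mul_assoc (L2 - L1) (C * G), hDF, Matrix.zero_mul]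
  have hcross2 : (L1 - K1) * (R1 * (L2 - L1)ᵀ) = 0 := by
    have h := congrArg Matrix.transpose hcross
    simpa only [Matrix.transpose_mul, Matrix.transpose_transpose, Matrix.transpose_zero, hR1t,
      Matrix.mul_assoc] using h
  -- Kalman gain facts
  have hK1t : K1ᵀ = J1 * (C * P1) := by
    rw [hK1def]
    simp only [Matrix.transpose_mul, Matrix.transpose_transpose, hJ1t, hP1t, Matrix.mul_assoc]
  have hR1K1t : R1 * K1ᵀ = C * P1 := by
    rw [hK1t, ← Matrix.mul_assoc, hR1J1, Matrix.one_mul]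
  have hKR : ∀ X : Matrix (Fin nz) (Fin ny) ℝ, K1 * (R1 * X) = P1 * (Cᵀ * X) := by
    intro X
    rw [hK1def, Matrix.mul_assoc (P1 * Cᵀ) J1, ← Matrix.mul_assoc J1 R1, hJ1R1,
      Matrix.one_mul, Matrix.mul_assoc]
  -- completing the square at Σ₁
  have hphi_raw : ∀ L : Matrix (Fin ny) (Fin nz) ℝ,
      P1 - L * (C * P1) - P1 * Cᵀ * Lᵀ + L * R1 * Lᵀ
        = P1 - K1 * R1 * K1ᵀ + (L - K1) * R1 * (L - K1)ᵀ := by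
    intro L
    simp only [Matrix.sub_mul, Matrix.mul_sub, Matrix.transpose_sub, Matrix.mul_assoc,
      hR1K1t, hKR]
    abel
  -- raw expansion of rho
  have hrho1raw : rho A Q G C R S1
      = P1 - L1 * (C * P1) - P1 * Cᵀ * L1ᵀ + L1 * R1 * L1ᵀ := by
    simp only [rho, Atil, Ftil, Wtil, Kg, Mg, hL1def, hK1def, hM1def, hT1def, hJ1def,
      hR1def, hP1def, Rt]
    simp only [Matrix.mul_assoc, Matrix.mul_add, Matrix.add_mul, Matrix.mul_sub,
      Matrix.sub_mul, Matrix.mul_one, Matrix.one_mul, Matrix.transpose_mul,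
      Matrix.transpose_add, Matrix.transpose_sub, Matrix.transpose_neg, Matrix.transpose_one,
      Matrix.transpose_transpose, Matrix.neg_mul, Matrix.mul_neg, neg_neg]
    abel
  have hrho2raw : rho A Q G C R S2
      = P2 - L2 * (C * P2) - P2 * Cᵀ * L2ᵀ + L2 * R2 * L2ᵀ := by
    simp only [rho, Atil, Ftil, Wtil, Kg, Mg, hL2def, hK2def, hM2def, hT2def, hJ2def,
      hR2def, hP2def, Rt]
    simp only [Matrix.mul_assoc, Matrix.mul_add, Matrix.add_mul, Matrix.mul_sub,
      Matrix.sub_mul, Matrix.mul_one, Matrix.one_mul, Matrix.transpose_mul,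
      Matrix.transpose_add, Matrix.transpose_sub, Matrix.transpose_neg, Matrix.transpose_one,
      Matrix.transpose_transpose, Matrix.neg_mul, Matrix.mul_neg, neg_neg]
    abel
  -- increments
  have hP2split : P2 = P1 + A * (S2 - S1) * Aᵀ := by
    rw [hP1def, hP2def]
    simp only [Matrix.mul_sub, Matrix.sub_mul]
    abel
  have hR2split : R2 = R1 + C * (A * (S2 - S1) * Aᵀ) * Cᵀ := by
    rw [hR1def, hR2def, Rt, Rt]
    simp only [Matrix.mul_sub, Matrix.sub_mul, Matrix.mul_add, Matrix.add_mul]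
    abel
  -- claim A : rho2 - psi = N2 Δ N2ᵀ
  have claimA : rho A Q G C R S2
      - (P1 - L2 * (C * P1) - P1 * Cᵀ * L2ᵀ + L2 * R1 * L2ᵀ)
      = (1 - L2 * C) * (A * (S2 - S1) * Aᵀ) * (1 - L2 * C)ᵀ := by
    rw [hrho2raw, hP2split, hR2split]
    simp only [Matrix.mul_assoc, Matrix.mul_add, Matrix.add_mul, Matrix.mul_sub,
      Matrix.sub_mul, Matrix.mul_one, Matrix.one_mul, Matrix.transpose_mul,
      Matrix.transpose_add, Matrix.transpose_sub, Matrix.transpose_one,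
      Matrix.transpose_transpose]
    abel
  -- claim B : psi - rho1 = D R1 Dᵀ
  have claimB : (P1 - L2 * (C * P1) - P1 * Cᵀ * L2ᵀ + L2 * R1 * L2ᵀ)
      - rho A Q G C R S1 = (L2 - L1) * R1 * (L2 - L1)ᵀ := by
    rw [hrho1raw, hphi_raw L2, hphi_raw L1]
    have hsplit : L2 - K1 = (L2 - L1) + (L1 - K1) := by abel
    rw [hsplit]
    simp only [Matrix.add_mul, Matrix.mul_add, Matrix.transpose_add, Matrix.mul_assoc,
      hcross, hcross2, add_zero, zero_add]
    abel
  -- assemble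
  have key : rho A Q G C R S2 - rho A Q G C R S1
      = (1 - L2 * C) * (A * (S2 - S1) * Aᵀ) * (1 - L2 * C)ᵀ
        + (L2 - L1) * R1 * (L2 - L1)ᵀ := by
    rw [← claimA, ← claimB]
    abel
  rw [key]
  exact (psd_conj (psd_conj hle A) (1 - L2 * C)).add (psd_conj hRT1.posSemidef (L2 - L1))
end
end

section
/- The state error covariance update map ρ of the optimal unknown-input filter is concave with respect to the Loewner order: for all α ∈ [0,1] and all positive semidefinite matrices Σ₁, Σ₂, one has ρ(αΣ₁ + (1−α)Σ₂) ⪰ α ρ(Σ₁) + (1−α) ρ(Σ₂). -/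
open Matrix BigOperators

noncomputable section

namespace UIF


/-- PSD conjugation with transpose. -/
lemma psd_conj {n m : ℕ} {S : Matrix (Fin n) (Fin n) ℝ} (hS : S.PosSemidef)
    (B : Matrix (Fin m) (Fin n) ℝ) : (B * S * Bᵀ).PosSemidef := by
  have := hS.mul_mul_conjTranspose_same B
  rwa [conjTranspose_eq_transpose_of_trivial] at this

lemma smul_psd {n : ℕ} {S : Matrix (Fin n) (Fin n) ℝ} (hS : S.PosSemidef) {a : ℝ}
    (ha : 0 ≤ a) : (a • S).PosSemidef := by
  refine ⟨?_, fun x => ?_⟩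
  · simpa [Matrix.IsHermitian, conjTranspose_smul] using congrArg (a • ·) hS.1
  · exact (hS.smul ha).2 x

lemma mulVec_inj_of_rank {m d : ℕ} {F : Matrix (Fin m) (Fin d) ℝ} (hF : F.rank = d) :
    Function.Injective F.mulVecLin := by
  rw [← LinearMap.ker_eq_bot]
  have h := LinearMap.finrank_range_add_finrank_ker F.mulVecLin
  rw [Matrix.rank] at hF
  rw [hF, Module.finrank_fin_fun] at h
  have hk : Module.finrank ℝ (LinearMap.ker F.mulVecLin) = 0 := by omega
  exact Submodule.finrank_eq_zero.mp hk

lemma posDef_conj_inj {m d : ℕ} {F : Matrix (Fin m) (Fin d) ℝ}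
    (hinj : Function.Injective F.mulVecLin) {N : Matrix (Fin m) (Fin m) ℝ}
    (hN : N.PosDef) : (Fᵀ * N * F).PosDef := by
  have hNt : Nᵀ = N := by
    rw [← conjTranspose_eq_transpose_of_trivial]; exact hN.1
  refine posDef_iff_dotProduct_mulVec.mpr ⟨?_, fun x hx => ?_⟩
  · show (Fᵀ * N * F)ᴴ = _
    rw [conjTranspose_eq_transpose_of_trivial, transpose_mul, transpose_mul,
      transpose_transpose, hNt, Matrix.mul_assoc]
  · have hFx : F *ᵥ x ≠ 0 := by
      intro h
      apply hx
      apply hinj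
      simp [mulVecLin_apply, h]
    have := (posDef_iff_dotProduct_mulVec.mp hN).2 hFx
    have hsx : star x = x := by ext i; exact star_trivial _
    have hsFx : star (F *ᵥ x) = F *ᵥ x := by ext i; exact star_trivial _
    rw [hsFx] at this
    rw [hsx, ← Matrix.mulVec_mulVec, ← Matrix.mulVec_mulVec,
      Matrix.dotProduct_mulVec, Matrix.vecMul_transpose]
    exact this

lemma schur_psd {m d : ℕ} {T : Matrix (Fin m) (Fin m) ℝ} (hT : T.PosDef)
    {F : Matrix (Fin m) (Fin d) ℝ} (hD : (Fᵀ * T⁻¹ * F).PosDef) :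
    (T - F * (Fᵀ * T⁻¹ * F)⁻¹ * Fᵀ).PosSemidef := by
  haveI := hT.isUnit.invertible
  haveI := hD.isUnit.invertible
  have h0 : ((Fᵀ * T⁻¹ * F) - Fᴴ * T⁻¹ * F).PosSemidef := by
    rw [conjTranspose_eq_transpose_of_trivial, sub_self]
    exact Matrix.PosSemidef.zero
  have hb : (fromBlocks T F Fᴴ (Fᵀ * T⁻¹ * F)).PosSemidef :=
    (Matrix.PosDef.fromBlocks₁₁ F _ hT).mpr h0
  have := (Matrix.PosDef.fromBlocks₂₂ T F hD).mp hb
  rwa [conjTranspose_eq_transpose_of_trivial] at this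

end UIF

namespace UIF

variable {ny nz nd : ℕ}

/-- Gain-parametrized covariance update. -/
def Jm (A Q : Matrix (Fin ny) (Fin ny) ℝ) (C : Matrix (Fin nz) (Fin ny) ℝ)
    (R : Matrix (Fin nz) (Fin nz) ℝ) (L : Matrix (Fin ny) (Fin nz) ℝ)
    (S : Matrix (Fin ny) (Fin ny) ℝ) : Matrix (Fin ny) (Fin ny) ℝ :=
  (1 - L * C) * (A * S * Aᵀ + Q) * (1 - L * C)ᵀ + L * R * Lᵀ

lemma rho_eq_Jm (A Q : Matrix (Fin ny) (Fin ny) ℝ) (G : Matrix (Fin ny) (Fin nd) ℝ)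
    (C : Matrix (Fin nz) (Fin ny) ℝ) (R : Matrix (Fin nz) (Fin nz) ℝ)
    (S : Matrix (Fin ny) (Fin ny) ℝ) :
    rho A Q G C R S = Jm A Q C R (Wtil A Q G C R S) S := by
  unfold rho Jm Atil Ftil Wtil
  generalize Kg A Q C R S = K
  generalize Mg A Q G C R S = M
  simp only [Matrix.mul_add, Matrix.add_mul, Matrix.mul_sub, Matrix.sub_mul,
    Matrix.mul_one, Matrix.one_mul, Matrix.neg_mul, Matrix.mul_neg,
    Matrix.smul_mul, Matrix.mul_smul, transpose_mul, transpose_add, transpose_sub,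
    transpose_neg, transpose_one, transpose_smul,
    transpose_transpose, Matrix.mul_assoc, sub_eq_add_neg, neg_add, neg_neg]
  abel

lemma conj_smul_add {n p : ℕ} (X : Matrix (Fin n) (Fin p) ℝ) (Y : Matrix (Fin p) (Fin n) ℝ)
    (P1 P2 : Matrix (Fin p) (Fin p) ℝ) (a b : ℝ) :
    X * (a • P1 + b • P2) * Y = a • (X * P1 * Y) + b • (X * P2 * Y) := by
  rw [Matrix.mul_add, Matrix.add_mul, Matrix.mul_smul, Matrix.mul_smul,
    Matrix.smul_mul, Matrix.smul_mul]

lemma Jm_affine (A Q : Matrix (Fin ny) (Fin ny) ℝ) (C : Matrix (Fin nz) (Fin ny) ℝ)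
    (R : Matrix (Fin nz) (Fin nz) ℝ) (L : Matrix (Fin ny) (Fin nz) ℝ)
    {a b : ℝ} (hab : a + b = 1) (S1 S2 : Matrix (Fin ny) (Fin ny) ℝ) :
    Jm A Q C R L (a • S1 + b • S2) = a • Jm A Q C R L S1 + b • Jm A Q C R L S2 := by
  have hQ : a • Q + b • Q = Q := by rw [← add_smul, hab, one_smul]
  have e1 : A * (a • S1 + b • S2) * Aᵀ + Q
      = a • (A * S1 * Aᵀ + Q) + b • (A * S2 * Aᵀ + Q) := by
    rw [conj_smul_add, smul_add, smul_add]
    conv_lhs => rw [← hQ]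
    abel
  have hL : a • (L * R * Lᵀ) + b • (L * R * Lᵀ) = L * R * Lᵀ := by
    rw [← add_smul, hab, one_smul]
  unfold Jm
  rw [e1, conj_smul_add, smul_add, smul_add]
  conv_lhs => rw [← hL]
  abel

lemma complete_square {n m : ℕ} (P : Matrix (Fin n) (Fin n) ℝ) (C : Matrix (Fin m) (Fin n) ℝ)
    (R T : Matrix (Fin m) (Fin m) ℝ) (K L : Matrix (Fin n) (Fin m) ℝ)
    (hT : T = C * P * Cᵀ + R) (h1 : K * T = P * Cᵀ) (h2 : T * Kᵀ = C * P) :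
    (1 - L * C) * P * (1 - L * C)ᵀ + L * R * Lᵀ
      = P - K * T * Kᵀ + (L - K) * T * (L - K)ᵀ := by
  have e : (1 - L * C) * P * (1 - L * C)ᵀ + L * R * Lᵀ
      = P - L * (C * P) - (P * Cᵀ) * Lᵀ + L * (C * P * Cᵀ + R) * Lᵀ := by
    simp only [Matrix.mul_add, Matrix.add_mul, Matrix.mul_sub, Matrix.sub_mul,
      Matrix.mul_one, Matrix.one_mul, Matrix.neg_mul, Matrix.mul_neg,
      Matrix.smul_mul, Matrix.mul_smul, transpose_mul, transpose_add, transpose_sub,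
      transpose_neg, transpose_one, transpose_smul,
      transpose_transpose, Matrix.mul_assoc, sub_eq_add_neg, neg_add, neg_neg]
    abel
  rw [e, ← hT, ← h1, ← h2]
  simp only [Matrix.mul_add, Matrix.add_mul, Matrix.mul_sub, Matrix.sub_mul,
    Matrix.mul_one, Matrix.one_mul, Matrix.neg_mul, Matrix.mul_neg,
    Matrix.smul_mul, Matrix.mul_smul, transpose_mul, transpose_add, transpose_sub,
    transpose_neg, transpose_one, transpose_smul,
    transpose_transpose, Matrix.mul_assoc, sub_eq_add_neg, neg_add, neg_neg]
  abel

end UIF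
namespace UIF

variable {ny nz nd : ℕ}

lemma sandwich {p q r : ℕ} (X : Matrix (Fin p) (Fin q) ℝ) (M : Matrix (Fin q) (Fin r) ℝ)
    (T : Matrix (Fin r) (Fin r) ℝ) : (X * M) * T * (X * M)ᵀ = X * (M * T * Mᵀ) * Xᵀ := by
  simp only [transpose_mul, Matrix.mul_assoc]

lemma rt_posDef (A Q : Matrix (Fin ny) (Fin ny) ℝ) (C : Matrix (Fin nz) (Fin ny) ℝ)
    (R : Matrix (Fin nz) (Fin nz) ℝ) (hQ : Q.PosDef) (hR : R.PosDef)
    (S : Matrix (Fin ny) (Fin ny) ℝ) (hS : S.PosSemidef) : (Rt A Q C R S).PosDef := by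
  have h : Rt A Q C R S = C * (A * S * Aᵀ + Q) * Cᵀ + R := rfl
  rw [h]
  exact Matrix.PosDef.posSemidef_add
    (psd_conj (Matrix.PosDef.posSemidef_add (psd_conj hS A) hQ).posSemidef C) hR

lemma dd_posDef (A Q : Matrix (Fin ny) (Fin ny) ℝ) (G : Matrix (Fin ny) (Fin nd) ℝ)
    (C : Matrix (Fin nz) (Fin ny) ℝ) (R : Matrix (Fin nz) (Fin nz) ℝ)
    (hQ : Q.PosDef) (hR : R.PosDef) (hF : (C * G).rank = nd)
    (S : Matrix (Fin ny) (Fin ny) ℝ) (hS : S.PosSemidef) :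
    ((C * G)ᵀ * (Rt A Q C R S)⁻¹ * (C * G)).PosDef :=
  posDef_conj_inj (mulVec_inj_of_rank hF) (rt_posDef A Q C R hQ hR S hS).inv

lemma Mg_mul (A Q : Matrix (Fin ny) (Fin ny) ℝ) (G : Matrix (Fin ny) (Fin nd) ℝ)
    (C : Matrix (Fin nz) (Fin ny) ℝ) (R : Matrix (Fin nz) (Fin nz) ℝ)
    (hQ : Q.PosDef) (hR : R.PosDef) (hF : (C * G).rank = nd)
    (S : Matrix (Fin ny) (Fin ny) ℝ) (hS : S.PosSemidef) :
    Mg A Q G C R S * (C * G) = 1 := by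
  haveI := (dd_posDef A Q G C R hQ hR hF S hS).isUnit.invertible
  show (((C * G)ᵀ * (Rt A Q C R S)⁻¹ * (C * G))⁻¹ * (C * G)ᵀ * (Rt A Q C R S)⁻¹) * (C * G) = 1
  simp only [Matrix.mul_assoc]
  rw [← Matrix.mul_assoc (C * G)ᵀ ((Rt A Q C R S)⁻¹) (C * G)]
  exact Matrix.inv_mul_of_invertible _

lemma Wtil_mul (A Q : Matrix (Fin ny) (Fin ny) ℝ) (G : Matrix (Fin ny) (Fin nd) ℝ)
    (C : Matrix (Fin nz) (Fin ny) ℝ) (R : Matrix (Fin nz) (Fin nz) ℝ)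
    (hQ : Q.PosDef) (hR : R.PosDef) (hF : (C * G).rank = nd)
    (S : Matrix (Fin ny) (Fin ny) ℝ) (hS : S.PosSemidef) :
    Wtil A Q G C R S * (C * G) = G := by
  have hM := Mg_mul A Q G C R hQ hR hF S hS
  have h : Wtil A Q G C R S
      = G * Mg A Q G C R S - Kg A Q C R S * C * G * Mg A Q G C R S + Kg A Q C R S := rfl
  rw [h, Matrix.add_mul, Matrix.sub_mul]
  simp only [Matrix.mul_assoc] at hM ⊢
  rw [hM]
  simp only [Matrix.mul_one]
  abel

lemma opt (A Q : Matrix (Fin ny) (Fin ny) ℝ) (G : Matrix (Fin ny) (Fin nd) ℝ)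
    (C : Matrix (Fin nz) (Fin ny) ℝ) (R : Matrix (Fin nz) (Fin nz) ℝ)
    (hQ : Q.PosDef) (hR : R.PosDef) (hF : (C * G).rank = nd)
    (S : Matrix (Fin ny) (Fin ny) ℝ) (hS : S.PosSemidef)
    (L' : Matrix (Fin ny) (Fin nz) ℝ) (hL' : L' * (C * G) = G) :
    (Jm A Q C R L' S - rho A Q G C R S).PosSemidef := by
  have hP : (A * S * Aᵀ + Q).PosDef := Matrix.PosDef.posSemidef_add (psd_conj hS A) hQ
  set P := A * S * Aᵀ + Q with hPdef
  set T := Rt A Q C R S with hTdef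
  set F := C * G with hFdef
  have hT : T.PosDef := rt_posDef A Q C R hQ hR S hS
  have hD : (Fᵀ * T⁻¹ * F).PosDef := dd_posDef A Q G C R hQ hR hF S hS
  set D := Fᵀ * T⁻¹ * F with hDdef
  haveI := hT.isUnit.invertible
  haveI := hD.isUnit.invertible
  have hTt : Tᵀ = T := by rw [← conjTranspose_eq_transpose_of_trivial]; exact hT.1
  have hTinvT : T⁻¹ᵀ = T⁻¹ := by rw [transpose_nonsing_inv, hTt]
  have hDt : Dᵀ = D := by rw [← conjTranspose_eq_transpose_of_trivial]; exact hD.1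
  have hDinvT : D⁻¹ᵀ = D⁻¹ := by rw [transpose_nonsing_inv, hDt]
  have hPt : Pᵀ = P := by rw [← conjTranspose_eq_transpose_of_trivial]; exact hP.1
  have hTP : T = C * P * Cᵀ + R := rfl
  set K := P * Cᵀ * T⁻¹ with hKdef
  set M := Mg A Q G C R S with hMset
  have hMdef : M = D⁻¹ * Fᵀ * T⁻¹ := rfl
  have h1 : K * T = P * Cᵀ := by
    rw [hKdef, Matrix.mul_assoc, Matrix.inv_mul_of_invertible, Matrix.mul_one]
  have h2 : T * Kᵀ = C * P := by
    rw [hKdef, transpose_mul, transpose_mul, transpose_transpose, hTinvT, hPt,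
      Matrix.mul_inv_cancel_left_of_invertible]
  have hMF : M * F = 1 := Mg_mul A Q G C R hQ hR hF S hS
  set L := Wtil A Q G C R S with hLset
  have hLdef : L = G * M - K * C * G * M + K := rfl
  have hLK : L - K = (G - K * F) * M := by
    rw [hLdef, hFdef]
    simp only [Matrix.sub_mul, Matrix.mul_assoc]
    abel
  have hXF : (L' - K) * F = G - K * F := by rw [Matrix.sub_mul, hL']
  have hMTM : M * T * Mᵀ = D⁻¹ := by
    rw [hMdef]
    simp only [transpose_mul, transpose_transpose, hTinvT, hDinvT, Matrix.mul_assoc]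
    rw [Matrix.inv_mul_cancel_left_of_invertible,
      ← Matrix.mul_assoc Fᵀ T⁻¹ (F * D⁻¹), ← Matrix.mul_assoc (Fᵀ * T⁻¹) F D⁻¹, ← hDdef,
      Matrix.inv_mul_cancel_left_of_invertible]
  have hLKTLK : (L - K) * T * (L - K)ᵀ = (L' - K) * (F * D⁻¹ * Fᵀ) * (L' - K)ᵀ := by
    rw [hLK, ← hXF, sandwich, hMTM, ← sandwich]
  have hJ' : Jm A Q C R L' S = P - K * T * Kᵀ + (L' - K) * T * (L' - K)ᵀ := by
    show (1 - L' * C) * P * (1 - L' * C)ᵀ + L' * R * L'ᵀ = _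
    exact complete_square P C R T K L' hTP h1 h2
  have hrho : rho A Q G C R S
      = P - K * T * Kᵀ + (L' - K) * (F * D⁻¹ * Fᵀ) * (L' - K)ᵀ := by
    rw [rho_eq_Jm, ← hLset]
    show (1 - L * C) * P * (1 - L * C)ᵀ + L * R * Lᵀ = _
    rw [complete_square P C R T K L hTP h1 h2, hLKTLK]
  rw [hJ', hrho]
  have e : (P - K * T * Kᵀ + (L' - K) * T * (L' - K)ᵀ)
        - (P - K * T * Kᵀ + (L' - K) * (F * D⁻¹ * Fᵀ) * (L' - K)ᵀ)
      = (L' - K) * (T - F * D⁻¹ * Fᵀ) * (L' - K)ᵀ := by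
    simp only [Matrix.mul_sub, Matrix.sub_mul]
    abel
  rw [e]
  exact psd_conj (schur_psd hT hD) (L' - K)

end UIF

/-- the state error covariance update map `ρ` is concave w.r.t. the
Loewner order: for `α ∈ [0,1]` and PSD `Σ₁, Σ₂`,
`ρ(αΣ₁ + (1−α)Σ₂) ⪰ α ρ(Σ₁) + (1−α) ρ(Σ₂)`. -/
theorem state_update_concave {ny nz nd : ℕ}
    (A Q : Matrix (Fin ny) (Fin ny) ℝ) (G : Matrix (Fin ny) (Fin nd) ℝ)
    (C : Matrix (Fin nz) (Fin ny) ℝ) (R : Matrix (Fin nz) (Fin nz) ℝ)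
    (hQ : Q.PosDef) (hR : R.PosDef) (hF : (C * G).rank = nd)
    (α : ℝ) (hα0 : 0 ≤ α) (hα1 : α ≤ 1)
    (S1 S2 : Matrix (Fin ny) (Fin ny) ℝ)
    (h1 : S1.PosSemidef) (h2 : S2.PosSemidef) :
    (rho A Q G C R (α • S1 + (1 - α) • S2)
      - (α • rho A Q G C R S1 + (1 - α) • rho A Q G C R S2)).PosSemidef := by
  have hb0 : (0:ℝ) ≤ 1 - α := by linarith
  have hab : α + (1 - α) = 1 := by ring
  have hSb : (α • S1 + (1 - α) • S2).PosSemidef :=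
    (UIF.smul_psd h1 hα0).add (UIF.smul_psd h2 hb0)
  set L' := Wtil A Q G C R (α • S1 + (1 - α) • S2) with hL'def
  have hL'F : L' * (C * G) = G :=
    UIF.Wtil_mul A Q G C R hQ hR hF _ hSb
  have hkey1 := UIF.opt A Q G C R hQ hR hF S1 h1 L' hL'F
  have hkey2 := UIF.opt A Q G C R hQ hR hF S2 h2 L' hL'F
  have e : rho A Q G C R (α • S1 + (1 - α) • S2)
        - (α • rho A Q G C R S1 + (1 - α) • rho A Q G C R S2)
      = α • (UIF.Jm A Q C R L' S1 - rho A Q G C R S1)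
        + (1 - α) • (UIF.Jm A Q C R L' S2 - rho A Q G C R S2) := by
    rw [UIF.rho_eq_Jm A Q G C R (α • S1 + (1 - α) • S2), ← hL'def,
      UIF.Jm_affine A Q C R L' hab, smul_sub, smul_sub]
    abel
  rw [e]
  exact (UIF.smul_psd hkey1 hα0).add (UIF.smul_psd hkey2 hb0)
end
end

section
/- The state error covariance update map is bounded above by its first-order Taylor approximation: for all positive semidefinite matrices Σ and X and all ε ≥ 0, ρ(Σ + εX) ⪯ ρ(Σ) + ε Ã(Σ) X Ã(Σ)ᵀ. -/
open Matrix BigOperators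

noncomputable section

section AuxLemmas

variable {ny nz nd : ℕ}

lemma psd_smul' {X : Matrix (Fin ny) (Fin ny) ℝ} (hX : X.PosSemidef) {ε : ℝ} (hε : 0 ≤ ε) :
    (ε • X).PosSemidef := by
  refine posSemidef_iff_dotProduct_mulVec.mpr ⟨?_, fun x => ?_⟩
  · simpa [Matrix.IsHermitian, conjTranspose_smul] using congrArg (ε • ·) hX.1.eq
  · rw [smul_mulVec, dotProduct_smul]
    exact mul_nonneg hε (hX.dotProduct_mulVec_nonneg x)

lemma psd_transpose_eq' {X : Matrix (Fin ny) (Fin ny) ℝ} (hX : X.PosSemidef) : Xᵀ = X := by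
  simpa [← conjTranspose_eq_transpose_of_trivial] using hX.1.eq

lemma inj_of_rank' {F : Matrix (Fin nz) (Fin nd) ℝ} (hF : F.rank = nd) :
    Function.Injective (F.mulVecLin) := by
  rw [← LinearMap.ker_eq_bot]
  have h1 := LinearMap.finrank_range_add_finrank_ker F.mulVecLin
  rw [Module.finrank_fin_fun] at h1
  have h2 : Module.finrank ℝ (LinearMap.ker F.mulVecLin) = 0 := by
    have : Matrix.rank F = Module.finrank ℝ (LinearMap.range F.mulVecLin) := rfl
    omega
  exact Submodule.finrank_eq_zero.mp h2

lemma posdef_conj' {N : Matrix (Fin nz) (Fin nz) ℝ} (hN : N.PosDef)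
    {F : Matrix (Fin nz) (Fin nd) ℝ} (hF : F.rank = nd) :
    (Fᵀ * N * F).PosDef := by
  have hinj := inj_of_rank' hF
  refine posDef_iff_dotProduct_mulVec.mpr ⟨?_, fun x hx => ?_⟩
  · have hNe : Nᵀ = N := by
      simpa [← conjTranspose_eq_transpose_of_trivial] using hN.1.eq
    simp [Matrix.IsHermitian, conjTranspose_eq_transpose_of_trivial, transpose_mul,
      Matrix.mul_assoc, hNe]
  · have hFx : F *ᵥ x ≠ 0 := by
      intro h
      exact hx (hinj (by simpa using h))
    have hcalc : x ⬝ᵥ ((Fᵀ * N * F) *ᵥ x) = (F *ᵥ x) ⬝ᵥ (N *ᵥ (F *ᵥ x)) := by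
      rw [← mulVec_mulVec, ← mulVec_mulVec, dotProduct_mulVec, vecMul_transpose]
    simpa [hcalc] using hN.dotProduct_mulVec_pos hFx

lemma Rt_posdef' {A Q : Matrix (Fin ny) (Fin ny) ℝ}
    {C : Matrix (Fin nz) (Fin ny) ℝ} {R : Matrix (Fin nz) (Fin nz) ℝ}
    (hQ : Q.PosDef) (hR : R.PosDef) {S : Matrix (Fin ny) (Fin ny) ℝ} (hS : S.PosSemidef) :
    (Rt A Q C R S).PosDef := by
  have hP : (A * S * Aᵀ + Q).PosSemidef := by
    have := hS.mul_mul_conjTranspose_same A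
    rw [conjTranspose_eq_transpose_of_trivial] at this
    exact this.add hQ.posSemidef
  have h2 := hP.mul_mul_conjTranspose_same C
  rw [conjTranspose_eq_transpose_of_trivial] at h2
  exact Matrix.PosDef.posSemidef_add h2 hR

variable (A Q : Matrix (Fin ny) (Fin ny) ℝ) (G : Matrix (Fin ny) (Fin nd) ℝ)
    (C : Matrix (Fin nz) (Fin ny) ℝ) (R : Matrix (Fin nz) (Fin nz) ℝ)
    (S : Matrix (Fin ny) (Fin ny) ℝ)

lemma atil_eq' :
    Atil A Q G C R S = (1 - Wtil A Q G C R S * C) * A := by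
  unfold Atil Wtil
  simp only [Matrix.mul_add, Matrix.add_mul, Matrix.sub_mul, Matrix.mul_sub,
    Matrix.mul_one, Matrix.one_mul, Matrix.mul_assoc]
  abel

lemma rho_eq' :
    rho A Q G C R S = (1 - Wtil A Q G C R S * C) * (A * S * Aᵀ + Q)
        * (1 - Wtil A Q G C R S * C)ᵀ
      + Wtil A Q G C R S * R * (Wtil A Q G C R S)ᵀ := by
  unfold rho Atil Ftil Wtil
  simp only [transpose_mul, transpose_add, transpose_sub, transpose_neg, transpose_one,
    transpose_transpose]
  simp only [Matrix.mul_add, Matrix.add_mul, Matrix.sub_mul, Matrix.mul_sub,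
    Matrix.neg_mul, Matrix.mul_neg, neg_neg, neg_sub,
    Matrix.mul_one, Matrix.one_mul, Matrix.mul_assoc]
  abel

section Gains

lemma FRF_posdef' (hQ : Q.PosDef) (hR : R.PosDef) (hF : (C * G).rank = nd)
    (hS : S.PosSemidef) : ((C * G)ᵀ * (Rt A Q C R S)⁻¹ * (C * G)).PosDef :=
  posdef_conj' (Rt_posdef' hQ hR hS).inv hF

lemma MgF_eq_one' (hQ : Q.PosDef) (hR : R.PosDef) (hF : (C * G).rank = nd)
    (hS : S.PosSemidef) : Mg A Q G C R S * (C * G) = 1 := by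
  unfold Mg
  rw [Matrix.mul_assoc, Matrix.mul_assoc, ← Matrix.mul_assoc ((C * G)ᵀ)]
  exact Matrix.nonsing_inv_mul _ ((FRF_posdef' A Q G C R S hQ hR hF hS).isUnit.map detMonoidHom)

lemma WtilF_eq_G' (hQ : Q.PosDef) (hR : R.PosDef) (hF : (C * G).rank = nd)
    (hS : S.PosSemidef) : Wtil A Q G C R S * (C * G) = G := by
  have hMF := MgF_eq_one' A Q G C R S hQ hR hF hS
  unfold Wtil
  simp only [Matrix.sub_mul, Matrix.add_mul, Matrix.mul_assoc, hMF, Matrix.mul_one]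
  abel

lemma RtWt_eq' (hQ : Q.PosDef) (hR : R.PosDef) (hF : (C * G).rank = nd)
    (hS : S.PosSemidef) :
    Rt A Q C R S * (Wtil A Q G C R S)ᵀ
      = C * (A * S * Aᵀ + Q)
        + (C * G) * (((C * G)ᵀ * (Rt A Q C R S)⁻¹ * (C * G))⁻¹ * Gᵀ
            * (1 - Kg A Q C R S * C)ᵀ) := by
  have hRt : (Rt A Q C R S).PosDef := Rt_posdef' hQ hR hS
  have hRtd : IsUnit (Rt A Q C R S).det := hRt.isUnit.map detMonoidHom
  have hRts : (Rt A Q C R S)ᵀ = Rt A Q C R S := by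
    simpa [← conjTranspose_eq_transpose_of_trivial] using hRt.1.eq
  have hRtis : ((Rt A Q C R S)⁻¹)ᵀ = (Rt A Q C R S)⁻¹ := by
    rw [Matrix.transpose_nonsing_inv, hRts]
  have hN : ((C * G)ᵀ * (Rt A Q C R S)⁻¹ * (C * G)).PosDef :=
    FRF_posdef' A Q G C R S hQ hR hF hS
  have hNs : (((C * G)ᵀ * (Rt A Q C R S)⁻¹ * (C * G))⁻¹)ᵀ
      = ((C * G)ᵀ * (Rt A Q C R S)⁻¹ * (C * G))⁻¹ := by
    rw [Matrix.transpose_nonsing_inv]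
    congr 1
    simpa [← conjTranspose_eq_transpose_of_trivial] using hN.1.eq
  have hPs : (A * S * Aᵀ + Q)ᵀ = A * S * Aᵀ + Q := by
    have hSs : Sᵀ = S := psd_transpose_eq' hS
    have hQs : Qᵀ = Q := psd_transpose_eq' hQ.posSemidef
    simp [transpose_add, transpose_mul, transpose_transpose, hSs, hQs, Matrix.mul_assoc]
  have hM : (Mg A Q G C R S)ᵀ
      = (Rt A Q C R S)⁻¹ * ((C * G) * ((C * G)ᵀ * (Rt A Q C R S)⁻¹ * (C * G))⁻¹) := by
    unfold Mg
    rw [transpose_mul, transpose_mul, transpose_transpose, hRtis, hNs, Matrix.mul_assoc]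
  have hK : (Kg A Q C R S)ᵀ = (Rt A Q C R S)⁻¹ * (C * (A * S * Aᵀ + Q)) := by
    unfold Kg
    rw [transpose_mul, transpose_mul, transpose_transpose, hRtis, hPs]
  have hc : Rt A Q C R S * (Rt A Q C R S)⁻¹ = 1 := Matrix.mul_nonsing_inv _ hRtd
  unfold Wtil
  simp only [transpose_sub, transpose_add, transpose_mul, transpose_transpose, transpose_one,
    hM, hK]
  simp only [Matrix.mul_add, Matrix.add_mul, Matrix.sub_mul, Matrix.mul_sub,
    Matrix.mul_one, Matrix.one_mul, Matrix.mul_assoc]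
  simp only [← Matrix.mul_assoc, hc, Matrix.one_mul]
  simp only [Matrix.mul_assoc]
  abel

end Gains

lemma main_alg' (P₀ Y' : Matrix (Fin ny) (Fin ny) ℝ) (W₀ W' : Matrix (Fin ny) (Fin nz) ℝ)
    (hP₀ : P₀ᵀ = P₀) (hY' : Y'ᵀ = Y') (hRs : Rᵀ = R) :
    ((1 - W₀ * C) * P₀ * (1 - W₀ * C)ᵀ + W₀ * R * W₀ᵀ + (1 - W₀ * C) * Y' * (1 - W₀ * C)ᵀ)
      - ((1 - W' * C) * (P₀ + Y') * (1 - W' * C)ᵀ + W' * R * W'ᵀ)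
    = (W₀ - W') * (C * (P₀ + Y') * Cᵀ + R) * (W₀ - W')ᵀ
      + ((W₀ - W') * ((C * (P₀ + Y') * Cᵀ + R) * W'ᵀ - C * (P₀ + Y'))
        + ((C * (P₀ + Y') * Cᵀ + R) * W'ᵀ - C * (P₀ + Y'))ᵀ * (W₀ - W')ᵀ) := by
  simp only [transpose_mul, transpose_add, transpose_sub, transpose_one,
    transpose_transpose, hP₀, hY', hRs]
  simp only [Matrix.mul_add, Matrix.add_mul, Matrix.sub_mul, Matrix.mul_sub,
    Matrix.mul_one, Matrix.one_mul, Matrix.mul_assoc]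
  abel

end AuxLemmas

/-- the state error covariance update map is bounded above by its
first-order Taylor approximation: for PSD `Σ, X` and `ε ≥ 0`,
`ρ(Σ + εX) ⪯ ρ(Σ) + ε Ã(Σ) X Ã(Σ)ᵀ`. -/
theorem state_update_taylor_bound {ny nz nd : ℕ}
    (A Q : Matrix (Fin ny) (Fin ny) ℝ) (G : Matrix (Fin ny) (Fin nd) ℝ)
    (C : Matrix (Fin nz) (Fin ny) ℝ) (R : Matrix (Fin nz) (Fin nz) ℝ)
    (hQ : Q.PosDef) (hR : R.PosDef) (hF : (C * G).rank = nd)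
    (S X : Matrix (Fin ny) (Fin ny) ℝ) (hS : S.PosSemidef) (hX : X.PosSemidef)
    (ε : ℝ) (hε : 0 ≤ ε) :
    (rho A Q G C R S + ε • (Atil A Q G C R S * X * (Atil A Q G C R S)ᵀ)
      - rho A Q G C R (S + ε • X)).PosSemidef := by
  classical
  -- replace `ε • X` by a single PSD matrix `Y`
  have hsm : ε • (Atil A Q G C R S * X * (Atil A Q G C R S)ᵀ)
      = Atil A Q G C R S * (ε • X) * (Atil A Q G C R S)ᵀ := by
    rw [Matrix.mul_smul, Matrix.smul_mul]
  rw [hsm]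
  set Y : Matrix (Fin ny) (Fin ny) ℝ := ε • X with hYdef
  have hY : Y.PosSemidef := psd_smul' hX hε
  clear_value Y
  clear hYdef hX hε
  set S' : Matrix (Fin ny) (Fin ny) ℝ := S + Y with hS'def
  have hS' : S'.PosSemidef := hS.add hY
  -- symmetry facts
  have hSs : Sᵀ = S := psd_transpose_eq' hS
  have hYs : Yᵀ = Y := psd_transpose_eq' hY
  have hQs : Qᵀ = Q := psd_transpose_eq' hQ.posSemidef
  have hRs : Rᵀ = R := psd_transpose_eq' hR.posSemidef
  have hP0 : (A * S * Aᵀ + Q)ᵀ = A * S * Aᵀ + Q := by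
    simp [transpose_add, transpose_mul, transpose_transpose, hSs, hQs, Matrix.mul_assoc]
  have hY' : (A * Y * Aᵀ)ᵀ = A * Y * Aᵀ := by
    simp [transpose_mul, transpose_transpose, hYs, Matrix.mul_assoc]
  set W₀ := Wtil A Q G C R S with hW₀
  set W' := Wtil A Q G C R S' with hW'
  set D := W₀ - W' with hD
  set Rt' := Rt A Q C R S' with hRt'def
  have hRt' : Rt'.PosDef := Rt_posdef' hQ hR hS'
  -- E = Rt' * W'ᵀ - C * P'  equals  (C*G) * Z
  set E : Matrix (Fin nz) (Fin ny) ℝ := Rt' * W'ᵀ - C * (A * S' * Aᵀ + Q) with hEdef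
  have hEZ : E = (C * G) * (((C * G)ᵀ * Rt'⁻¹ * (C * G))⁻¹ * Gᵀ
      * (1 - Kg A Q C R S' * C)ᵀ) := by
    rw [hEdef, hRt'def, hW', RtWt_eq' A Q G C R S' hQ hR hF hS', add_sub_cancel_left]
  have hDF : D * (C * G) = 0 := by
    rw [hD, Matrix.sub_mul, hW₀, hW', WtilF_eq_G' A Q G C R S hQ hR hF hS,
      WtilF_eq_G' A Q G C R S' hQ hR hF hS', sub_self]
  have hDE : D * E = 0 := by
    rw [hEZ, ← Matrix.mul_assoc, hDF, Matrix.zero_mul]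
  have hED : Eᵀ * Dᵀ = 0 := by
    rw [← transpose_mul, hDE, transpose_zero]
  -- the main algebraic identity
  have hP'split : A * S' * Aᵀ + Q = (A * S * Aᵀ + Q) + A * Y * Aᵀ := by
    rw [hS'def]
    simp only [Matrix.mul_add, Matrix.add_mul]
    abel
  have key : rho A Q G C R S + Atil A Q G C R S * Y * (Atil A Q G C R S)ᵀ
        - rho A Q G C R S'
      = D * Rt' * Dᵀ + (D * E + Eᵀ * Dᵀ) := by
    rw [hEdef, hRt'def]
    rw [rho_eq' A Q G C R S, rho_eq' A Q G C R S', atil_eq' A Q G C R S]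
    rw [hD, hW₀, hW']
    show _ = _
    unfold Rt
    rw [hP'split]
    have hAYA : Wtil A Q G C R S * C * A * Y * (Wtil A Q G C R S * C * A)ᵀ
        = Wtil A Q G C R S * C * A * Y * (Wtil A Q G C R S * C * A)ᵀ := rfl
    have hexp : (1 - Wtil A Q G C R S * C) * A * Y * ((1 - Wtil A Q G C R S * C) * A)ᵀ
        = (1 - Wtil A Q G C R S * C) * (A * Y * Aᵀ) * (1 - Wtil A Q G C R S * C)ᵀ := by
      simp only [transpose_mul, Matrix.mul_assoc]
    rw [hexp]
    exact main_alg' C R (A * S * Aᵀ + Q) (A * Y * Aᵀ) (Wtil A Q G C R S)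
      (Wtil A Q G C R (S + Y)) hP0 hY' hRs
  rw [key, hDE, hED, add_zero, add_zero]
  have := hRt'.posSemidef.mul_mul_conjTranspose_same D
  rwa [conjTranspose_eq_transpose_of_trivial] at this
end
end

section
/- For every horizon k ∈ [1,N] and all positive semidefinite matrices Σ₀ and X, the matrix-valued function ε ↦ φ_k(Σ₀ + εX) is differentiable at ε = 0 and its derivative there equals Ψ_k X Ψ_kᵀ, where Ψ_k = Ã_k Ã_{k−1} ⋯ Ã_1 is the product of the closed-loop matrices evaluated along the trajectory Σ_t = φ_t(Σ₀); moreover the 0-horizon directional derivative is X itself. -/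
open Matrix BigOperators

noncomputable section

/-- The k-horizon map `φ_k = ρ_k ∘ ⋯ ∘ ρ_1`, where step `t` (here `t = k+1`) uses
the data `(A_{t-1}, Q_{t-1}, G_{t-1}, C_t, R_t)`. -/
def phiMap {ny nz nd : ℕ} (A Q : ℕ → Matrix (Fin ny) (Fin ny) ℝ)
    (G : ℕ → Matrix (Fin ny) (Fin nd) ℝ) (C : ℕ → Matrix (Fin nz) (Fin ny) ℝ)
    (R : ℕ → Matrix (Fin nz) (Fin nz) ℝ) :
    ℕ → Matrix (Fin ny) (Fin ny) ℝ → Matrix (Fin ny) (Fin ny) ℝ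
  | 0, S => S
  | k + 1, S => rho (A k) (Q k) (G k) (C (k + 1)) (R (k + 1)) (phiMap A Q G C R k S)

/-- `Ψ_k := Ã_k Ã_{k-1} ⋯ Ã_1` where `Ã_t` is evaluated at `Σ_{t-1} = φ_{t-1}(Σ₀)`
with step-`t` data (and `Ψ_0 = I`). -/
def PsiProd {ny nz nd : ℕ} (A Q : ℕ → Matrix (Fin ny) (Fin ny) ℝ)
    (G : ℕ → Matrix (Fin ny) (Fin nd) ℝ) (C : ℕ → Matrix (Fin nz) (Fin ny) ℝ)
    (R : ℕ → Matrix (Fin nz) (Fin nz) ℝ) (S0 : Matrix (Fin ny) (Fin ny) ℝ) :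
    ℕ → Matrix (Fin ny) (Fin ny) ℝ
  | 0 => 1
  | k + 1 =>
      Atil (A k) (Q k) (G k) (C (k + 1)) (R (k + 1)) (phiMap A Q G C R k S0) *
        PsiProd A Q G C R S0 k

attribute [local instance] Matrix.normedAddCommGroup Matrix.normedSpace

/-! ### Auxiliary material -/

set_option maxHeartbeats 1000000

section MatrixCalculus

variable {m n p : Type*} [Fintype m] [Fintype n] [Fintype p]

theorem hasDerivAt_matrix {f : ℝ → Matrix m n ℝ} {f' : Matrix m n ℝ} {x : ℝ} :
    HasDerivAt f f' x ↔ ∀ i j, HasDerivAt (fun t => f t i j) (f' i j) x :=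
  ⟨fun h i j => hasDerivAt_pi.1 (hasDerivAt_pi.1 h i) j,
   fun h => hasDerivAt_pi.2 fun i => hasDerivAt_pi.2 fun j => h i j⟩

theorem differentiableAt_matrix {f : ℝ → Matrix m n ℝ} {x : ℝ} :
    DifferentiableAt ℝ f x ↔ ∀ i j, DifferentiableAt ℝ (fun t => f t i j) x := by
  constructor
  · intro h i j
    exact (differentiableAt_pi.1 (differentiableAt_pi.1 h i)) j
  · intro h
    exact differentiableAt_pi.2 fun i => differentiableAt_pi.2 fun j => h i j

theorem HasDerivAt.matmul {f : ℝ → Matrix m n ℝ} {g : ℝ → Matrix n p ℝ}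
    {f' : Matrix m n ℝ} {g' : Matrix n p ℝ} {x : ℝ}
    (hf : HasDerivAt f f' x) (hg : HasDerivAt g g' x) :
    HasDerivAt (fun t => f t * g t) (f' * g x + f x * g') x := by
  rw [hasDerivAt_matrix] at *
  intro i j
  simp only [Matrix.mul_apply, Matrix.add_apply]
  rw [← Finset.sum_add_distrib]
  exact HasDerivAt.fun_sum fun k _ => ((hf i k).mul (hg k j)).congr_deriv (by ring)

theorem HasDerivAt.const_matmul {g : ℝ → Matrix n p ℝ} {g' : Matrix n p ℝ} {x : ℝ}
    (B : Matrix m n ℝ) (hg : HasDerivAt g g' x) :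
    HasDerivAt (fun t => B * g t) (B * g') x := by
  simpa using (hasDerivAt_const x B).matmul hg

theorem HasDerivAt.matmul_const {f : ℝ → Matrix m n ℝ} {f' : Matrix m n ℝ} {x : ℝ}
    (hf : HasDerivAt f f' x) (B : Matrix n p ℝ) :
    HasDerivAt (fun t => f t * B) (f' * B) x := by
  simpa using hf.matmul (hasDerivAt_const x B)

theorem HasDerivAt.matrix_transpose {f : ℝ → Matrix m n ℝ} {f' : Matrix m n ℝ} {x : ℝ}
    (hf : HasDerivAt f f' x) : HasDerivAt (fun t => (f t)ᵀ) f'ᵀ x := by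
  rw [hasDerivAt_matrix] at *
  intro i j
  simpa only [Matrix.transpose_apply] using hf j i

theorem DifferentiableAt.matrix_det {n : Type*} [Fintype n] [DecidableEq n]
    {f : ℝ → Matrix n n ℝ} {x : ℝ}
    (hf : ∀ i j, DifferentiableAt ℝ (fun t => f t i j) x) :
    DifferentiableAt ℝ (fun t => (f t).det) x := by
  simp only [Matrix.det_apply]
  apply DifferentiableAt.fun_sum
  intro σ _
  simp only [Units.smul_def, zsmul_eq_mul]
  exact (DifferentiableAt.fun_finsetProd (fun i _ => hf (σ i) i)).const_mul _

theorem DifferentiableAt.matrix_adjugate {n : Type*} [Fintype n] [DecidableEq n]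
    {f : ℝ → Matrix n n ℝ} {x : ℝ}
    (hf : ∀ i j, DifferentiableAt ℝ (fun t => f t i j) x) (i j : n) :
    DifferentiableAt ℝ (fun t => (f t).adjugate i j) x := by
  simp only [Matrix.adjugate_apply]
  apply DifferentiableAt.matrix_det
  intro a b
  simp only [Matrix.updateRow_apply]
  by_cases h : a = j <;> simp [h, hf]

theorem hasDerivAt_matrix_inv {n : Type*} [Fintype n] [DecidableEq n]
    {f : ℝ → Matrix n n ℝ} {f' : Matrix n n ℝ} {x : ℝ}
    (hf : HasDerivAt f f' x) (h0 : IsUnit (f x).det) :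
    HasDerivAt (fun t => (f t)⁻¹) (-((f x)⁻¹ * f' * (f x)⁻¹)) x := by
  have hent : ∀ i j, DifferentiableAt ℝ (fun t => f t i j) x :=
    fun i j => ((hasDerivAt_matrix.1 hf) i j).differentiableAt
  have hdet : DifferentiableAt ℝ (fun t => (f t).det) x := DifferentiableAt.matrix_det hent
  have hdet0 : (f x).det ≠ 0 := h0.ne_zero
  have hdiff : DifferentiableAt ℝ (fun t => (f t)⁻¹) x := by
    rw [differentiableAt_matrix]
    intro i j
    have hrw : (fun t => (f t)⁻¹ i j) = fun t => ((f t).det)⁻¹ * (f t).adjugate i j := by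
      funext t
      rw [Matrix.inv_def, Ring.inverse_eq_inv]
      simp [Matrix.smul_apply, smul_eq_mul]
    rw [hrw]
    exact (hdet.inv hdet0).mul (DifferentiableAt.matrix_adjugate hent i j)
  have hZ : HasDerivAt (fun t => (f t)⁻¹) (deriv (fun t => (f t)⁻¹) x) x := hdiff.hasDerivAt
  set Z := deriv (fun t => (f t)⁻¹) x with hZdef
  have hev : (fun t => f t * (f t)⁻¹) =ᶠ[nhds x] fun _ => 1 := by
    filter_upwards [hdet.continuousAt.eventually_ne hdet0] with t ht
    exact Matrix.mul_nonsing_inv _ (isUnit_iff_ne_zero.2 ht)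
  have hconst : HasDerivAt (fun t => f t * (f t)⁻¹) 0 x :=
    (hasDerivAt_const x (1 : Matrix n n ℝ)).congr_of_eventuallyEq hev
  have hprod : HasDerivAt (fun t => f t * (f t)⁻¹) (f' * (f x)⁻¹ + f x * Z) x := hf.matmul hZ
  have heq : f' * (f x)⁻¹ + f x * Z = 0 := hprod.unique hconst
  have h2 : f x * Z = -(f' * (f x)⁻¹) := by
    rw [add_comm] at heq
    exact eq_neg_of_add_eq_zero_left heq
  have hZval : Z = -((f x)⁻¹ * f' * (f x)⁻¹) := by
    calc Z = ((f x)⁻¹ * f x) * Z := by rw [Matrix.nonsing_inv_mul _ h0, Matrix.one_mul]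
      _ = (f x)⁻¹ * (f x * Z) := by rw [Matrix.mul_assoc]
      _ = -((f x)⁻¹ * (f' * (f x)⁻¹)) := by rw [h2, Matrix.mul_neg]
      _ = -((f x)⁻¹ * f' * (f x)⁻¹) := by rw [Matrix.mul_assoc]
  exact hZval ▸ hZ

end MatrixCalculus

section PosHelpers

set_option linter.unusedSectionVars false

variable {m n : Type*} [Fintype m] [Fintype n]

theorem real_transpose_eq {M : Matrix n n ℝ} (h : M.IsHermitian) : Mᵀ = M := by
  rw [← Matrix.conjTranspose_eq_transpose_of_trivial]; exact h

theorem psd_conj_s4 {S : Matrix n n ℝ} (hS : S.PosSemidef) (B : Matrix m n ℝ) :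
    (B * S * Bᵀ).PosSemidef := by
  have := hS.mul_mul_conjTranspose_same B
  rwa [Matrix.conjTranspose_eq_transpose_of_trivial] at this

theorem rank_mulVec_injective {nz nd : ℕ} {F : Matrix (Fin nz) (Fin nd) ℝ}
    (h : F.rank = nd) : Function.Injective F.mulVec := by
  rw [← Matrix.coe_mulVecLin, ← LinearMap.ker_eq_bot]
  have hrn := LinearMap.finrank_range_add_finrank_ker F.mulVecLin
  rw [show Module.finrank ℝ (LinearMap.range F.mulVecLin) = nd from h] at hrn
  simp only [Module.finrank_pi, Fintype.card_fin] at hrn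
  have hker : Module.finrank ℝ (LinearMap.ker F.mulVecLin) = 0 := by omega
  exact Submodule.finrank_eq_zero.1 hker

theorem posdef_conj_of_injective [DecidableEq m] [DecidableEq n] {N : Matrix m m ℝ}
    (hN : N.PosDef) {F : Matrix m n ℝ} (hinj : Function.Injective F.mulVec) :
    (Fᵀ * N * F).PosDef := by
  refine Matrix.PosDef.of_dotProduct_mulVec_pos ?_ ?_
  · have := Matrix.isHermitian_conjTranspose_mul_mul F hN.1
    rwa [Matrix.conjTranspose_eq_transpose_of_trivial] at this
  · intro x hx
    have hFx : F *ᵥ x ≠ 0 := by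
      intro h
      exact hx (hinj (by simpa [Matrix.mulVec_zero] using h))
    have := hN.dotProduct_mulVec_pos hFx
    rw [← Matrix.conjTranspose_eq_transpose_of_trivial F]
    simpa only [star_mulVec, Matrix.dotProduct_mulVec, Matrix.vecMul_vecMul] using this

end PosHelpers

theorem rho_psd {ny nz nd : ℕ} {A Q : Matrix (Fin ny) (Fin ny) ℝ}
    {G : Matrix (Fin ny) (Fin nd) ℝ} {C : Matrix (Fin nz) (Fin ny) ℝ}
    {R : Matrix (Fin nz) (Fin nz) ℝ} {S : Matrix (Fin ny) (Fin ny) ℝ}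
    (hQ : Q.PosDef) (hR : R.PosDef) (hS : S.PosSemidef) :
    (rho A Q G C R S).PosSemidef := by
  unfold rho
  exact ((psd_conj_s4 hS _).add (psd_conj_s4 hQ.posSemidef _)).add (psd_conj_s4 hR.posSemidef _)

theorem cancel_key {ny nz nd : ℕ}
    (P : Matrix (Fin ny) (Fin ny) ℝ) (R Rt : Matrix (Fin nz) (Fin nz) ℝ)
    (C : Matrix (Fin nz) (Fin ny) ℝ) (G : Matrix (Fin ny) (Fin nd) ℝ)
    (D : Matrix (Fin nd) (Fin nd) ℝ)
    (K : Matrix (Fin ny) (Fin nz) ℝ) (M : Matrix (Fin nd) (Fin nz) ℝ)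
    (K' : Matrix (Fin ny) (Fin nz) ℝ) (M' : Matrix (Fin nd) (Fin nz) ℝ)
    (hPT : Pᵀ = P) (hRdef : R = Rt - C * P * Cᵀ) (hRiT : (Rt⁻¹)ᵀ = Rt⁻¹)
    (hc1 : Rt⁻¹ * Rt = 1) (hc2 : Rt * Rt⁻¹ = 1) (hDT : Dᵀ = D)
    (hc3 : D * ((C * G)ᵀ * Rt⁻¹ * (C * G)) = 1)
    (hK : K = P * Cᵀ * Rt⁻¹) (hM : M = D * (C * G)ᵀ * Rt⁻¹)
    (hM' : M' * (C * G) = 0) :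
    (-(K' * C) * (1 - G * M * C) + (1 - K * C) * -(G * M' * C)) * P *
        ((1 - K * C) * (1 - G * M * C))ᵀ
      + (G * M' - (K' * C * G * M + K * C * G * M') + K') * R *
        (G * M - K * C * G * M + K)ᵀ = 0 := by
  have c1' : ∀ {w : Type} [Fintype w] (X : Matrix (Fin nz) w ℝ),
      Rt⁻¹ * (Rt * X) = X := by
    intro w _ X; rw [← Matrix.mul_assoc, hc1, Matrix.one_mul]
  have c2' : ∀ {w : Type} [Fintype w] (X : Matrix (Fin nz) w ℝ),
      Rt * (Rt⁻¹ * X) = X := by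
    intro w _ X; rw [← Matrix.mul_assoc, hc2, Matrix.one_mul]
  have c3e : D * (Gᵀ * (Cᵀ * (Rt⁻¹ * (C * G)))) = 1 := by
    simpa [Matrix.transpose_mul, Matrix.mul_assoc] using hc3
  have c3' : ∀ {w : Type} [Fintype w] (X : Matrix (Fin nd) w ℝ),
      D * (Gᵀ * (Cᵀ * (Rt⁻¹ * (C * (G * X))))) = X := by
    intro w _ X
    calc D * (Gᵀ * (Cᵀ * (Rt⁻¹ * (C * (G * X)))))
        = (D * (Gᵀ * (Cᵀ * (Rt⁻¹ * (C * G))))) * X := by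
          simp only [Matrix.mul_assoc]
      _ = X := by rw [c3e, Matrix.one_mul]
  have hM'a : ∀ {w : Type} [Fintype w] (X : Matrix (Fin nd) w ℝ),
      M' * (C * (G * X)) = 0 := by
    intro w _ X
    calc M' * (C * (G * X)) = (M' * (C * G)) * X := by simp only [Matrix.mul_assoc]
      _ = 0 := by rw [hM', Matrix.zero_mul]
  have hM'e : M' * (C * G) = 0 := hM'
  subst hK hM hRdef
  simp only [Matrix.transpose_mul, Matrix.transpose_sub, Matrix.transpose_add,
    Matrix.transpose_one, Matrix.transpose_transpose, hPT, hRiT, hDT,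
    Matrix.mul_sub, Matrix.sub_mul, Matrix.mul_add, Matrix.add_mul,
    Matrix.neg_mul, Matrix.mul_neg, Matrix.one_mul, Matrix.mul_one,
    Matrix.mul_assoc, c1', c2', c3', c3e, hM'a, hM'e,
    Matrix.zero_mul, Matrix.mul_zero, neg_zero, neg_neg]
  abel


theorem step_hasDerivAt {ny nz nd : ℕ}
    (A Q : Matrix (Fin ny) (Fin ny) ℝ) (G : Matrix (Fin ny) (Fin nd) ℝ)
    (C : Matrix (Fin nz) (Fin ny) ℝ) (R : Matrix (Fin nz) (Fin nz) ℝ)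
    (hQ : Q.PosDef) (hR : R.PosDef) (hrank : (C * G).rank = nd)
    (σ : ℝ → Matrix (Fin ny) (Fin ny) ℝ) (H : Matrix (Fin ny) (Fin ny) ℝ)
    (S : Matrix (Fin ny) (Fin ny) ℝ) (hσ0 : σ 0 = S) (hS : S.PosSemidef)
    (hσ : HasDerivAt σ H 0) :
    HasDerivAt (fun ε => rho A Q G C R (σ ε))
      (Atil A Q G C R S * H * (Atil A Q G C R S)ᵀ) 0 := by
  subst hσ0
  -- abbreviations
  set P0 := A * σ 0 * Aᵀ + Q with hP0def
  set Rt0 := Rt A Q C R (σ 0) with hRt0def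
  set PH := A * H * Aᵀ with hPHdef
  set Z1 := -(Rt0⁻¹ * (C * PH * Cᵀ) * Rt0⁻¹) with hZ1def
  set D0 := (C * G)ᵀ * Rt0⁻¹ * (C * G) with hD0def
  set DD := D0⁻¹ with hDDdef
  set Z2 := -(DD * ((C * G)ᵀ * Z1 * (C * G)) * DD) with hZ2def
  set K0 := Kg A Q C R (σ 0) with hK0def
  set M0 := Mg A Q G C R (σ 0) with hM0def
  set Kp := PH * Cᵀ * Rt0⁻¹ + P0 * Cᵀ * Z1 with hKpdef
  set Mp := Z2 * (C * G)ᵀ * Rt0⁻¹ + DD * (C * G)ᵀ * Z1 with hMpdef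
  set J0 := 1 - K0 * C with hJ0def
  set E0 := 1 - G * M0 * C with hE0def
  set L0 := J0 * E0 with hL0def
  set W0 := G * M0 - K0 * C * G * M0 + K0 with hW0def
  set Lp := -(Kp * C) * E0 + J0 * -(G * Mp * C) with hLpdef
  set Wp := G * Mp - (Kp * C * G * M0 + K0 * C * G * Mp) + Kp with hWpdef
  -- positivity facts
  have hP0pd : P0.PosDef := Matrix.PosDef.posSemidef_add (psd_conj_s4 hS A) hQ
  have hRtpd : Rt0.PosDef := Matrix.PosDef.posSemidef_add (psd_conj_s4 hP0pd.posSemidef C) hR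
  have hRtU : IsUnit Rt0.det := hRtpd.det_pos.ne'.isUnit
  have hD0pd : D0.PosDef := posdef_conj_of_injective hRtpd.inv (rank_mulVec_injective hrank)
  have hD0U : IsUnit D0.det := hD0pd.det_pos.ne'.isUnit
  -- symmetry facts
  have hPT : P0ᵀ = P0 := by
    rw [hP0def]
    have hs : (σ 0)ᵀ = σ 0 := real_transpose_eq hS.1
    have hq : Qᵀ = Q := real_transpose_eq hQ.1
    simp [Matrix.transpose_add, Matrix.transpose_mul, Matrix.transpose_transpose, hs, hq,
      Matrix.mul_assoc]
  have hRT : Rᵀ = R := real_transpose_eq hR.1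
  have hRdef : R = Rt0 - C * P0 * Cᵀ := by
    rw [hRt0def, hP0def]
    show R = C * (A * σ 0 * Aᵀ + Q) * Cᵀ + R - C * (A * σ 0 * Aᵀ + Q) * Cᵀ
    exact (add_sub_cancel_left _ _).symm
  have hRiT : (Rt0⁻¹)ᵀ = Rt0⁻¹ := by
    rw [Matrix.transpose_nonsing_inv, real_transpose_eq hRtpd.1]
  have hc1 : Rt0⁻¹ * Rt0 = 1 := Matrix.nonsing_inv_mul _ hRtU
  have hc2 : Rt0 * Rt0⁻¹ = 1 := Matrix.mul_nonsing_inv _ hRtU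
  have hDT : DDᵀ = DD := by
    rw [hDDdef, Matrix.transpose_nonsing_inv, real_transpose_eq hD0pd.1]
  have hc3 : DD * ((C * G)ᵀ * Rt0⁻¹ * (C * G)) = 1 := Matrix.nonsing_inv_mul _ hD0U
  have hKdef : K0 = P0 * Cᵀ * Rt0⁻¹ := by
    rw [hK0def, hP0def, hRt0def]; rfl
  have hMdef : M0 = DD * (C * G)ᵀ * Rt0⁻¹ := by
    rw [hM0def, hDDdef, hD0def, hRt0def]; rfl
  -- derivative of curves
  have hPc : HasDerivAt (fun ε => A * σ ε * Aᵀ + Q) PH 0 :=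
    ((hσ.const_matmul A).matmul_const Aᵀ).add_const Q
  have hRtc : HasDerivAt (fun ε => Rt A Q C R (σ ε)) (C * PH * Cᵀ) 0 :=
    ((hPc.const_matmul C).matmul_const Cᵀ).add_const R
  have hRic : HasDerivAt (fun ε => (Rt A Q C R (σ ε))⁻¹) Z1 0 :=
    hasDerivAt_matrix_inv hRtc hRtU
  have hD0c : HasDerivAt (fun ε => (C * G)ᵀ * (Rt A Q C R (σ ε))⁻¹ * (C * G))
      ((C * G)ᵀ * Z1 * (C * G)) 0 := (hRic.const_matmul _).matmul_const _
  have hDc : HasDerivAt (fun ε => ((C * G)ᵀ * (Rt A Q C R (σ ε))⁻¹ * (C * G))⁻¹) Z2 0 :=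
    hasDerivAt_matrix_inv hD0c hD0U
  have hMc : HasDerivAt (fun ε => Mg A Q G C R (σ ε)) Mp 0 :=
    (hDc.matmul_const (C * G)ᵀ).matmul hRic
  have hKc : HasDerivAt (fun ε => Kg A Q C R (σ ε)) Kp 0 :=
    (hPc.matmul_const Cᵀ).matmul hRic
  have hJc : HasDerivAt (fun ε => 1 - Kg A Q C R (σ ε) * C) (-(Kp * C)) 0 :=
    (hKc.matmul_const C).const_sub 1
  have hEc : HasDerivAt (fun ε => 1 - G * Mg A Q G C R (σ ε) * C) (-(G * Mp * C)) 0 :=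
    ((hMc.const_matmul G).matmul_const C).const_sub 1
  have hLc : HasDerivAt
      (fun ε => (1 - Kg A Q C R (σ ε) * C) * (1 - G * Mg A Q G C R (σ ε) * C)) Lp 0 :=
    hJc.matmul hEc
  have hLTc : HasDerivAt
      (fun ε => ((1 - Kg A Q C R (σ ε) * C) * (1 - G * Mg A Q G C R (σ ε) * C))ᵀ) Lpᵀ 0 :=
    hLc.matrix_transpose
  have hWc : HasDerivAt
      (fun ε => G * Mg A Q G C R (σ ε) - Kg A Q C R (σ ε) * C * G * Mg A Q G C R (σ ε)
        + Kg A Q C R (σ ε)) Wp 0 :=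
    ((hMc.const_matmul G).sub (((hKc.matmul_const C).matmul_const G).matmul hMc)).add hKc
  have hWTc : HasDerivAt
      (fun ε => (G * Mg A Q G C R (σ ε) - Kg A Q C R (σ ε) * C * G * Mg A Q G C R (σ ε)
        + Kg A Q C R (σ ε))ᵀ) Wpᵀ 0 :=
    hWc.matrix_transpose
  -- M' kills F
  have hc3assoc : DD * ((C * G)ᵀ * (Rt0⁻¹ * (C * G))) = 1 := by
    simpa [Matrix.mul_assoc] using hc3
  have hMpF : Mp * (C * G) = 0 := by
    rw [hMpdef, hZ2def]
    simp only [Matrix.add_mul, Matrix.neg_mul, Matrix.mul_assoc, hc3assoc, Matrix.mul_one]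
    exact neg_add_cancel _
  -- rewrite rho through the joint gain form
  have hfun : (fun ε => rho A Q G C R (σ ε)) = (fun ε =>
      (1 - Kg A Q C R (σ ε) * C) * (1 - G * Mg A Q G C R (σ ε) * C) * (A * σ ε * Aᵀ + Q) *
        ((1 - Kg A Q C R (σ ε) * C) * (1 - G * Mg A Q G C R (σ ε) * C))ᵀ +
      (G * Mg A Q G C R (σ ε) - Kg A Q C R (σ ε) * C * G * Mg A Q G C R (σ ε)
          + Kg A Q C R (σ ε)) * R *
        (G * Mg A Q G C R (σ ε) - Kg A Q C R (σ ε) * C * G * Mg A Q G C R (σ ε)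
          + Kg A Q C R (σ ε))ᵀ) := by
    funext ε
    show rho A Q G C R (σ ε) = _
    unfold rho Atil Ftil Wtil
    simp only [Matrix.transpose_neg, Matrix.transpose_mul, Matrix.neg_mul, Matrix.mul_neg,
      neg_neg, Matrix.mul_add, Matrix.add_mul, Matrix.mul_assoc]
    try abel
  rw [hfun]
  have hbig : HasDerivAt (fun ε =>
      (1 - Kg A Q C R (σ ε) * C) * (1 - G * Mg A Q G C R (σ ε) * C) * (A * σ ε * Aᵀ + Q) *
        ((1 - Kg A Q C R (σ ε) * C) * (1 - G * Mg A Q G C R (σ ε) * C))ᵀ +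
      (G * Mg A Q G C R (σ ε) - Kg A Q C R (σ ε) * C * G * Mg A Q G C R (σ ε)
          + Kg A Q C R (σ ε)) * R *
        (G * Mg A Q G C R (σ ε) - Kg A Q C R (σ ε) * C * G * Mg A Q G C R (σ ε)
          + Kg A Q C R (σ ε))ᵀ)
      (((Lp * P0 + L0 * PH) * L0ᵀ + L0 * P0 * Lpᵀ) + (Wp * R * W0ᵀ + W0 * R * Wpᵀ)) 0 :=
    ((hLc.matmul hPc).matmul hLTc).add ((hWc.matmul_const R).matmul hWTc)
  have claimA : Lp * P0 * L0ᵀ + Wp * R * W0ᵀ = 0 := by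
    have := cancel_key P0 R Rt0 C G DD K0 M0 Kp Mp hPT hRdef hRiT hc1 hc2 hDT hc3
      hKdef hMdef hMpF
    exact this
  have claimB : L0 * P0 * Lpᵀ + W0 * R * Wpᵀ = 0 := by
    have h : L0 * P0 * Lpᵀ + W0 * R * Wpᵀ = (Lp * P0 * L0ᵀ + Wp * R * W0ᵀ)ᵀ := by
      simp only [Matrix.transpose_add, Matrix.transpose_mul, Matrix.transpose_transpose,
        hPT, hRT, Matrix.mul_assoc]
    rw [h, claimA, Matrix.transpose_zero]
  have hres : L0 * PH * L0ᵀ = Atil A Q G C R (σ 0) * H * (Atil A Q G C R (σ 0))ᵀ := by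
    have hAtil : Atil A Q G C R (σ 0) = L0 * A := by
      rw [hL0def, hJ0def, hE0def, hK0def, hM0def]; rfl
    rw [hAtil, hPHdef]
    simp only [Matrix.transpose_mul, Matrix.mul_assoc]
  have keyEq : (((Lp * P0 + L0 * PH) * L0ᵀ + L0 * P0 * Lpᵀ) + (Wp * R * W0ᵀ + W0 * R * Wpᵀ))
      = Atil A Q G C R (σ 0) * H * (Atil A Q G C R (σ 0))ᵀ := by
    calc (((Lp * P0 + L0 * PH) * L0ᵀ + L0 * P0 * Lpᵀ) + (Wp * R * W0ᵀ + W0 * R * Wpᵀ))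
        = (Lp * P0 * L0ᵀ + Wp * R * W0ᵀ) + (L0 * P0 * Lpᵀ + W0 * R * Wpᵀ)
            + L0 * PH * L0ᵀ := by
          simp only [Matrix.add_mul]; abel
      _ = Atil A Q G C R (σ 0) * H * (Atil A Q G C R (σ 0))ᵀ := by
          rw [claimA, claimB, hres]; simp
  exact hbig.congr_deriv keyEq



/-- for every horizon `k ∈ [1,N]` and PSD `Σ₀, X`, the map
`ε ↦ φ_k(Σ₀ + εX)` is differentiable at `ε = 0` with derivative `Ψ_k X Ψ_kᵀ`,
where `Ψ_k = Ã_k ⋯ Ã_1`; moreover the 0-horizon directional derivative is `X`. -/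
theorem khorizon_directional_derivative {ny nz nd : ℕ} (N : ℕ)
    (A Q : ℕ → Matrix (Fin ny) (Fin ny) ℝ) (G : ℕ → Matrix (Fin ny) (Fin nd) ℝ)
    (C : ℕ → Matrix (Fin nz) (Fin ny) ℝ) (R : ℕ → Matrix (Fin nz) (Fin nz) ℝ)
    (hQ : ∀ k, (Q k).PosDef) (hR : ∀ k, (R k).PosDef)
    (hF : ∀ k, (C (k + 1) * G k).rank = nd)
    (S0 X : Matrix (Fin ny) (Fin ny) ℝ) (hS0 : S0.PosSemidef) (hX : X.PosSemidef) :
    (∀ k, 1 ≤ k → k ≤ N →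
      HasDerivAt (fun ε : ℝ => phiMap A Q G C R k (S0 + ε • X))
        (PsiProd A Q G C R S0 k * X * (PsiProd A Q G C R S0 k)ᵀ) 0) ∧
    HasDerivAt (fun ε : ℝ => phiMap A Q G C R 0 (S0 + ε • X)) X 0 := by
  have key : ∀ k, (phiMap A Q G C R k S0).PosSemidef ∧
      HasDerivAt (fun ε : ℝ => phiMap A Q G C R k (S0 + ε • X))
        (PsiProd A Q G C R S0 k * X * (PsiProd A Q G C R S0 k)ᵀ) 0 := by
    intro k
    induction k with
    | zero =>
      refine ⟨hS0, ?_⟩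
      have hbase : HasDerivAt (fun ε : ℝ => S0 + ε • X) X 0 := by
        rw [hasDerivAt_matrix]
        intro i j
        simp only [Matrix.add_apply, Matrix.smul_apply, smul_eq_mul]
        simpa using ((hasDerivAt_id (0 : ℝ)).mul_const (X i j)).const_add (S0 i j)
      have hone : PsiProd A Q G C R S0 0 * X * (PsiProd A Q G C R S0 0)ᵀ = X := by
        simp [PsiProd]
      rw [hone]; exact hbase
    | succ k ih =>
      have h0 : phiMap A Q G C R k (S0 + (0 : ℝ) • X) = phiMap A Q G C R k S0 := by
        rw [zero_smul, add_zero]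
      have hstep := step_hasDerivAt (A k) (Q k) (G k) (C (k + 1)) (R (k + 1))
        (hQ k) (hR (k + 1)) (hF k)
        (fun ε : ℝ => phiMap A Q G C R k (S0 + ε • X))
        (PsiProd A Q G C R S0 k * X * (PsiProd A Q G C R S0 k)ᵀ)
        (phiMap A Q G C R k S0) h0 ih.1 ih.2
      refine ⟨rho_psd (hQ k) (hR (k + 1)) ih.1, ?_⟩
      have hψ : Atil (A k) (Q k) (G k) (C (k + 1)) (R (k + 1)) (phiMap A Q G C R k S0) *
          (PsiProd A Q G C R S0 k * X * (PsiProd A Q G C R S0 k)ᵀ) *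
          (Atil (A k) (Q k) (G k) (C (k + 1)) (R (k + 1)) (phiMap A Q G C R k S0))ᵀ
          = PsiProd A Q G C R S0 (k + 1) * X * (PsiProd A Q G C R S0 (k + 1))ᵀ := by
        show _ = Atil (A k) (Q k) (G k) (C (k + 1)) (R (k + 1)) (phiMap A Q G C R k S0) *
          PsiProd A Q G C R S0 k * X *
          (Atil (A k) (Q k) (G k) (C (k + 1)) (R (k + 1)) (phiMap A Q G C R k S0) *
            PsiProd A Q G C R S0 k)ᵀ
        simp only [Matrix.transpose_mul, Matrix.mul_assoc]
      exact hψ ▸ hstep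
  exact ⟨fun k _ _ => (key k).2, by simpa [PsiProd] using (key 0).2⟩
end
end

section
/- The unknown-input error covariance update map ρᵈ is concave with respect to the Loewner order: for all α ∈ [0,1] and all positive semidefinite matrices Σ₁, Σ₂, one has ρᵈ(αΣ₁ + (1−α)Σ₂) ⪰ α ρᵈ(Σ₁) + (1−α) ρᵈ(Σ₂). -/
open Matrix BigOperators

noncomputable section

lemma psdSmul {n : ℕ} {M : Matrix (Fin n) (Fin n) ℝ} (h : M.PosSemidef) {a : ℝ} (ha : 0 ≤ a) :
    (a • M).PosSemidef := by
  refine posSemidef_iff_dotProduct_mulVec.mpr ⟨?_, fun x => ?_⟩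
  · unfold Matrix.IsHermitian
    rw [conjTranspose_smul, h.1]
    simp
  · rw [smul_mulVec, dotProduct_smul]
    exact smul_nonneg ha ((posSemidef_iff_dotProduct_mulVec.mp h).2 x)

lemma injOfRank {nz nd : ℕ} {F : Matrix (Fin nz) (Fin nd) ℝ} (hF : F.rank = nd) :
    Function.Injective F.mulVecLin := by
  rw [← LinearMap.ker_eq_bot]
  have h := F.mulVecLin.finrank_range_add_finrank_ker
  rw [Module.finrank_pi] at h
  rw [Matrix.rank] at hF
  simp only [Fintype.card_fin] at h
  have : Module.finrank ℝ (LinearMap.ker F.mulVecLin) = 0 := by omega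
  exact Submodule.finrank_eq_zero.mp this

lemma posDefConj {nz nd : ℕ} {N : Matrix (Fin nz) (Fin nz) ℝ} (hN : N.PosDef)
    {F : Matrix (Fin nz) (Fin nd) ℝ} (hF : Function.Injective F.mulVecLin) :
    (Fᵀ * N * F).PosDef := by
  refine posDef_iff_dotProduct_mulVec.mpr ⟨?_, fun x hx => ?_⟩
  · have := isHermitian_conjTranspose_mul_mul F hN.1
    rwa [conjTranspose_eq_transpose_of_trivial] at this
  · have hFx : F *ᵥ x ≠ 0 := by
      intro h0
      exact hx (hF (by simpa using h0))
    have := (posDef_iff_dotProduct_mulVec.mp hN).2 hFx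
    simpa [← Matrix.mulVec_mulVec, Matrix.dotProduct_mulVec, Matrix.vecMul_transpose,
      star_trivial] using this

lemma psdConj {nz nd : ℕ} {X : Matrix (Fin nz) (Fin nz) ℝ} (hX : X.PosSemidef)
    (B : Matrix (Fin nd) (Fin nz) ℝ) : (B * X * Bᵀ).PosSemidef := by
  have := hX.mul_mul_conjTranspose_same B
  rwa [conjTranspose_eq_transpose_of_trivial] at this

/-- Key variational inequality: for `X` positive definite, `F` injective, and any left
inverse `M` of `F`, one has `M X Mᵀ ⪰ (Fᵀ X⁻¹ F)⁻¹`. -/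
lemma keyIneq {nz nd : ℕ} {X : Matrix (Fin nz) (Fin nz) ℝ} (hX : X.PosDef)
    {F : Matrix (Fin nz) (Fin nd) ℝ} (hF : Function.Injective F.mulVecLin)
    (M : Matrix (Fin nd) (Fin nz) ℝ) (hM : M * F = 1) :
    (M * X * Mᵀ - (Fᵀ * X⁻¹ * F)⁻¹).PosSemidef := by
  have hHpd : (Fᵀ * X⁻¹ * F).PosDef := posDefConj hX.inv hF
  set g : Matrix (Fin nd) (Fin nd) ℝ := (Fᵀ * X⁻¹ * F)⁻¹ with hg
  have hdX : IsUnit X.det := hX.det_pos.ne'.isUnit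
  have hXX : X * X⁻¹ = 1 := Matrix.mul_nonsing_inv _ hdX
  have hXX' : X⁻¹ * X = 1 := Matrix.nonsing_inv_mul _ hdX
  have hgH : g * (Fᵀ * X⁻¹ * F) = 1 := Matrix.nonsing_inv_mul _ hHpd.det_pos.ne'.isUnit
  have hXisym : X⁻¹ᵀ = X⁻¹ := by
    have := hX.isHermitian.inv
    rwa [Matrix.IsHermitian, conjTranspose_eq_transpose_of_trivial] at this
  have hgsym : gᵀ = g := by
    have := hHpd.isHermitian.inv
    rwa [Matrix.IsHermitian, conjTranspose_eq_transpose_of_trivial] at this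
  set P : Matrix (Fin nd) (Fin nz) ℝ := g * Fᵀ * X⁻¹ with hP
  have hPt : Pᵀ = X⁻¹ * F * g := by
    rw [hP, transpose_mul, transpose_mul, transpose_transpose, hXisym, hgsym, Matrix.mul_assoc]
  have hPX : P * X = g * Fᵀ := by
    rw [hP, Matrix.mul_assoc, hXX', Matrix.mul_one]
  have hPXP : P * X * Pᵀ = g := by
    rw [hPX, hPt]
    calc g * Fᵀ * (X⁻¹ * F * g) = g * (Fᵀ * X⁻¹ * F) * g := by
          simp only [Matrix.mul_assoc]
      _ = g := by rw [hgH, Matrix.one_mul]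
  have hPXM : P * X * Mᵀ = g := by
    rw [hPX]
    calc g * Fᵀ * Mᵀ = g * (M * F)ᵀ := by rw [transpose_mul, ← Matrix.mul_assoc]
      _ = g := by rw [hM, transpose_one, Matrix.mul_one]
  have hMXP : M * X * Pᵀ = g := by
    rw [hPt]
    calc M * X * (X⁻¹ * F * g) = M * (X * X⁻¹) * F * g := by simp only [Matrix.mul_assoc]
      _ = g := by rw [hXX, Matrix.mul_one, hM, Matrix.one_mul]
  have hmain : M * X * Mᵀ - g = (M - P) * X * (M - P)ᵀ := by
    simp only [transpose_sub, Matrix.sub_mul, Matrix.mul_sub]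
    rw [hPXP, hPXM, hMXP]
    abel
  rw [hmain]
  exact psdConj hX.posSemidef (M - P)

lemma pdSmul {n : ℕ} {M : Matrix (Fin n) (Fin n) ℝ} (h : M.PosDef) {a : ℝ} (ha : 0 < a) :
    (a • M).PosDef := by
  refine posDef_iff_dotProduct_mulVec.mpr ⟨?_, fun x hx => ?_⟩
  · unfold Matrix.IsHermitian
    rw [conjTranspose_smul, h.1]
    simp
  · rw [smul_mulVec, dotProduct_smul]
    exact smul_pos ha ((posDef_iff_dotProduct_mulVec.mp h).2 hx)

lemma concaveAux {nz nd : ℕ} {F : Matrix (Fin nz) (Fin nd) ℝ}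
    (hFi : Function.Injective F.mulVecLin)
    {X1 X2 : Matrix (Fin nz) (Fin nz) ℝ} (hX1 : X1.PosDef) (hX2 : X2.PosDef)
    {α : ℝ} (hα0 : 0 ≤ α) (hα1 : α ≤ 1)
    {Xb : Matrix (Fin nz) (Fin nz) ℝ} (hXbeq : Xb = α • X1 + (1 - α) • X2) :
    ((Fᵀ * Xb⁻¹ * F)⁻¹
      - (α • (Fᵀ * X1⁻¹ * F)⁻¹ + (1 - α) • (Fᵀ * X2⁻¹ * F)⁻¹)).PosSemidef := by
  have hXb : Xb.PosDef := by
    rcases eq_or_lt_of_le hα0 with h | h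
    · rw [hXbeq, ← h]
      simpa using hX2
    · rcases eq_or_lt_of_le hα1 with h' | h'
      · rw [hXbeq, h']
        simpa using hX1
      · rw [hXbeq]
        exact (pdSmul hX1 h).add_posSemidef (psdSmul hX2.posSemidef (by linarith))
  have hHpd : (Fᵀ * Xb⁻¹ * F).PosDef := posDefConj hXb.inv hFi
  set g : Matrix (Fin nd) (Fin nd) ℝ := (Fᵀ * Xb⁻¹ * F)⁻¹ with hg
  set M : Matrix (Fin nd) (Fin nz) ℝ := g * Fᵀ * Xb⁻¹ with hM
  have hMF : M * F = 1 := by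
    rw [hM, Matrix.mul_assoc, Matrix.mul_assoc, ← Matrix.mul_assoc (Fᵀ), hg]
    exact Matrix.nonsing_inv_mul _ hHpd.det_pos.ne'.isUnit
  have hMXbM : M * Xb * Mᵀ = g := by
    have hdX : IsUnit Xb.det := hXb.det_pos.ne'.isUnit
    have hXisym : Xb⁻¹ᵀ = Xb⁻¹ := by
      have := hXb.isHermitian.inv
      rwa [Matrix.IsHermitian, conjTranspose_eq_transpose_of_trivial] at this
    have hgsym : gᵀ = g := by
      have := hHpd.isHermitian.inv
      rwa [Matrix.IsHermitian, conjTranspose_eq_transpose_of_trivial] at this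
    have hMt : Mᵀ = Xb⁻¹ * F * g := by
      rw [hM, transpose_mul, transpose_mul, transpose_transpose, hXisym, hgsym]
      simp only [Matrix.mul_assoc]
    rw [hM, hMt, Matrix.mul_assoc (g * Fᵀ), Matrix.nonsing_inv_mul _ hdX, Matrix.mul_one]
    calc g * Fᵀ * (Xb⁻¹ * F * g)
        = g * (Fᵀ * Xb⁻¹ * F) * g := by simp only [Matrix.mul_assoc]
      _ = g := by rw [hg, Matrix.nonsing_inv_mul _ hHpd.det_pos.ne'.isUnit, Matrix.one_mul]
  have hd1 : (M * X1 * Mᵀ - (Fᵀ * X1⁻¹ * F)⁻¹).PosSemidef := keyIneq hX1 hFi M hMF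
  have hd2 : (M * X2 * Mᵀ - (Fᵀ * X2⁻¹ * F)⁻¹).PosSemidef := keyIneq hX2 hFi M hMF
  have hsplit : (Fᵀ * Xb⁻¹ * F)⁻¹
      - (α • (Fᵀ * X1⁻¹ * F)⁻¹ + (1 - α) • (Fᵀ * X2⁻¹ * F)⁻¹)
      = α • (M * X1 * Mᵀ - (Fᵀ * X1⁻¹ * F)⁻¹)
        + (1 - α) • (M * X2 * Mᵀ - (Fᵀ * X2⁻¹ * F)⁻¹) := by
    rw [← hg, ← hMXbM, hXbeq]
    simp only [Matrix.mul_add, Matrix.add_mul, Matrix.mul_smul, Matrix.smul_mul, smul_sub]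
    abel
  rw [hsplit]
  exact (psdSmul hd1 hα0).add (psdSmul hd2 (by linarith))

end
/-- the unknown-input error covariance update map `ρᵈ` is concave
w.r.t. the Loewner order: for `α ∈ [0,1]` and PSD `Σ₁, Σ₂`,
`ρᵈ(αΣ₁ + (1−α)Σ₂) ⪰ α ρᵈ(Σ₁) + (1−α) ρᵈ(Σ₂)`. -/
theorem input_update_concave {ny nz nd : ℕ}
    (A Q : Matrix (Fin ny) (Fin ny) ℝ) (G : Matrix (Fin ny) (Fin nd) ℝ)
    (C : Matrix (Fin nz) (Fin ny) ℝ) (R : Matrix (Fin nz) (Fin nz) ℝ)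
    (hQ : Q.PosDef) (hR : R.PosDef) (hF : (C * G).rank = nd)
    (α : ℝ) (hα0 : 0 ≤ α) (hα1 : α ≤ 1)
    (S1 S2 : Matrix (Fin ny) (Fin ny) ℝ)
    (h1 : S1.PosSemidef) (h2 : S2.PosSemidef) :
    (rhod A Q G C R (α • S1 + (1 - α) • S2)
      - (α • rhod A Q G C R S1 + (1 - α) • rhod A Q G C R S2)).PosSemidef := by
  have hFi : Function.Injective (C * G).mulVecLin := injOfRank hF
  have hRtPD : ∀ S : Matrix (Fin ny) (Fin ny) ℝ, S.PosSemidef → (Rt A Q C R S).PosDef := by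
    intro S hS
    have h3 : (C * (A * S * Aᵀ + Q) * Cᵀ).PosSemidef :=
      psdConj ((psdConj hS A).add hQ.posSemidef) C
    exact Matrix.PosDef.posSemidef_add h3 hR
  have haff : Rt A Q C R (α • S1 + (1 - α) • S2)
      = α • Rt A Q C R S1 + (1 - α) • Rt A Q C R S2 := by
    unfold Rt
    simp only [Matrix.mul_add, Matrix.add_mul, Matrix.mul_smul, Matrix.smul_mul, smul_add,
      Matrix.mul_assoc]
    module
  unfold rhod
  exact concaveAux hFi (hRtPD S1 h1) (hRtPD S2 h2) hα0 hα1 haff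
end

section
/- For every constant α ∈ [0,1] and every positive semidefinite matrix Σ, one has α ρᵈ(Σ) ⪯ ρᵈ(αΣ). -/
open Matrix BigOperators

noncomputable section

variable {n m d : ℕ}

lemma psd_smul'_s10 {M : Matrix (Fin n) (Fin n) ℝ} (hM : M.PosSemidef) {c : ℝ} (hc : 0 ≤ c) :
    (c • M).PosSemidef := by
  refine Matrix.PosSemidef.of_dotProduct_mulVec_nonneg ?_ ?_
  · rw [Matrix.IsHermitian, Matrix.conjTranspose_smul, star_trivial, hM.1.eq]
  intro x
  rw [Matrix.smul_mulVec, dotProduct_smul, smul_eq_mul]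
  exact mul_nonneg hc (hM.dotProduct_mulVec_nonneg x)

lemma psd_mul_mul_transpose {M : Matrix (Fin n) (Fin n) ℝ} (hM : M.PosSemidef)
    (B : Matrix (Fin m) (Fin n) ℝ) : (B * M * Bᵀ).PosSemidef := by
  simpa [Matrix.conjTranspose_eq_transpose_of_trivial] using hM.mul_mul_conjTranspose_same B

lemma inv_antitone' {X Y : Matrix (Fin n) (Fin n) ℝ} (hX : X.PosDef) (hY : Y.PosDef)
    (h : (Y - X).PosSemidef) : (X⁻¹ - Y⁻¹).PosSemidef := by
  have hXd : IsUnit X.det := isUnit_iff_ne_zero.mpr hX.det_pos.ne'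
  have hYd : IsUnit Y.det := isUnit_iff_ne_zero.mpr hY.det_pos.ne'
  have hYY : Y * Y⁻¹ = 1 := Matrix.mul_nonsing_inv _ hYd
  have hYY' : Y⁻¹ * Y = 1 := Matrix.nonsing_inv_mul _ hYd
  have hXX : X * X⁻¹ = 1 := Matrix.mul_nonsing_inv _ hXd
  have hXX' : X⁻¹ * X = 1 := Matrix.nonsing_inv_mul _ hXd
  have hsymmD : (Y - X)ᵀ = Y - X := by
    rw [Matrix.transpose_sub, ← Matrix.conjTranspose_eq_transpose_of_trivial Y,
      ← Matrix.conjTranspose_eq_transpose_of_trivial X, hY.isHermitian.eq, hX.isHermitian.eq]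
  have hYinvT : (Y⁻¹)ᵀ = Y⁻¹ := by
    rw [← Matrix.conjTranspose_eq_transpose_of_trivial, hY.inv.isHermitian.eq]
  have c1 : ∀ B : Matrix (Fin n) (Fin n) ℝ, X * (X⁻¹ * B) = B := fun B => by
    rw [← Matrix.mul_assoc, hXX, Matrix.one_mul]
  have c2 : ∀ B : Matrix (Fin n) (Fin n) ℝ, X⁻¹ * (X * B) = B := fun B => by
    rw [← Matrix.mul_assoc, hXX', Matrix.one_mul]
  have c3 : ∀ B : Matrix (Fin n) (Fin n) ℝ, Y * (Y⁻¹ * B) = B := fun B => by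
    rw [← Matrix.mul_assoc, hYY, Matrix.one_mul]
  have c4 : ∀ B : Matrix (Fin n) (Fin n) ℝ, Y⁻¹ * (Y * B) = B := fun B => by
    rw [← Matrix.mul_assoc, hYY', Matrix.one_mul]
  have key : X⁻¹ - Y⁻¹ =
      Y⁻¹ * (Y - X) * (Y⁻¹)ᵀ + (Y⁻¹ * (Y - X)) * X⁻¹ * (Y⁻¹ * (Y - X))ᵀ := by
    rw [Matrix.transpose_mul, hsymmD, hYinvT]
    simp only [Matrix.mul_sub, Matrix.sub_mul, Matrix.mul_assoc, c1, c2, c3, c4,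
      hXX, hXX', hYY, hYY', Matrix.mul_one, Matrix.one_mul]
    abel
  rw [key]
  exact ((psd_mul_mul_transpose h Y⁻¹).add (psd_mul_mul_transpose hX.inv.posSemidef _))

lemma mulVec_inj_of_rank {F : Matrix (Fin m) (Fin d) ℝ} (hF : F.rank = d) :
    Function.Injective F.mulVec := by
  have h1 := LinearMap.finrank_range_add_finrank_ker F.mulVecLin
  have hr : Module.finrank ℝ (LinearMap.range F.mulVecLin) = d := hF
  rw [hr, Module.finrank_fin_fun] at h1
  have hker : Module.finrank ℝ (LinearMap.ker F.mulVecLin) = 0 := by omega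
  have : LinearMap.ker F.mulVecLin = ⊥ := Submodule.finrank_eq_zero.mp hker
  have hinj := LinearMap.ker_eq_bot.mp this
  intro x y hxy
  exact hinj (by simpa [Matrix.mulVecLin_apply] using hxy)

lemma pd_conj_rect {F : Matrix (Fin m) (Fin d) ℝ} (hF : F.rank = d)
    {M : Matrix (Fin m) (Fin m) ℝ} (hM : M.PosDef) : (Fᵀ * M * F).PosDef := by
  have hinj := mulVec_inj_of_rank hF
  refine Matrix.PosDef.of_dotProduct_mulVec_pos ?_ ?_
  · have := (hM.posSemidef.conjTranspose_mul_mul_same F).1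
    simpa [Matrix.conjTranspose_eq_transpose_of_trivial] using this
  · intro x hx
    have hFx : F *ᵥ x ≠ 0 := fun h0 => hx (hinj (h0.trans (Matrix.mulVec_zero F).symm))
    have hpos := hM.dotProduct_mulVec_pos hFx
    have key2 : star x ⬝ᵥ (Fᵀ * M * F) *ᵥ x = star (F *ᵥ x) ⬝ᵥ M *ᵥ (F *ᵥ x) := by
      rw [star_trivial, star_trivial, Matrix.dotProduct_mulVec, ← Matrix.vecMul_vecMul,
        ← Matrix.vecMul_vecMul, Matrix.vecMul_transpose, Matrix.dotProduct_mulVec, ← Matrix.dotProduct_mulVec ((F *ᵥ x) ᵥ* M)]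
    rw [key2]
    exact hpos


lemma pd_smul' {n : ℕ} {M : Matrix (Fin n) (Fin n) ℝ} (hM : M.PosDef) {c : ℝ} (hc : 0 < c) :
    (c • M).PosDef := by
  refine Matrix.PosDef.of_dotProduct_mulVec_pos ?_ ?_
  · rw [Matrix.IsHermitian, Matrix.conjTranspose_smul, star_trivial, hM.1.eq]
  · intro x hx
    rw [Matrix.smul_mulVec, dotProduct_smul, smul_eq_mul]
    exact mul_pos hc (hM.dotProduct_mulVec_pos hx)


/-- for every `α ∈ [0,1]` and every PSD `Σ`, `α ρᵈ(Σ) ⪯ ρᵈ(αΣ)`. -/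
theorem input_update_scaling {ny nz nd : ℕ}
    (A Q : Matrix (Fin ny) (Fin ny) ℝ) (G : Matrix (Fin ny) (Fin nd) ℝ)
    (C : Matrix (Fin nz) (Fin ny) ℝ) (R : Matrix (Fin nz) (Fin nz) ℝ)
    (hQ : Q.PosDef) (hR : R.PosDef) (hF : (C * G).rank = nd)
    (α : ℝ) (hα0 : 0 ≤ α) (hα1 : α ≤ 1)
    (S : Matrix (Fin ny) (Fin ny) ℝ) (hS : S.PosSemidef) :
    (rhod A Q G C R (α • S) - α • rhod A Q G C R S).PosSemidef := by
  classical
  have hRt : ∀ (T : Matrix (Fin ny) (Fin ny) ℝ), T.PosSemidef → (Rt A Q C R T).PosDef := by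
    intro T hT
    have h1 : (A * T * Aᵀ).PosSemidef := psd_mul_mul_transpose hT A
    have h2 : (A * T * Aᵀ + Q).PosSemidef := h1.add hQ.posSemidef
    have h3 : (C * (A * T * Aᵀ + Q) * Cᵀ).PosSemidef := psd_mul_mul_transpose h2 C
    exact Matrix.PosDef.posSemidef_add h3 hR
  have hS' : (α • S).PosSemidef := psd_smul'_s10 hS hα0
  have hR1 : (Rt A Q C R S).PosDef := hRt S hS
  have hR2 : (Rt A Q C R (α • S)).PosDef := hRt _ hS'
  set F := C * G with hFdef
  set R1 := Rt A Q C R S with hR1def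
  set R2 := Rt A Q C R (α • S) with hR2def
  have hN1 : (Fᵀ * R1⁻¹ * F).PosDef := pd_conj_rect hF hR1.inv
  have hN2 : (Fᵀ * R2⁻¹ * F).PosDef := pd_conj_rect hF hR2.inv
  rcases eq_or_lt_of_le hα0 with h0 | hpos
  · have hpd0 : ((C * G)ᵀ * (Rt A Q C R 0)⁻¹ * (C * G)).PosDef :=
      pd_conj_rect hF (hRt 0 Matrix.PosSemidef.zero).inv
    simp only [rhod, ← h0, zero_smul, sub_zero]
    exact hpd0.inv.posSemidef
  · have hα : α ≠ 0 := hpos.ne'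
    have hdiff : R2 - α • R1 = (1 - α) • (C * Q * Cᵀ + R) := by
      rw [hR2def, hR1def]
      simp only [Rt, Matrix.mul_add, Matrix.add_mul, Matrix.mul_smul, Matrix.smul_mul,
        smul_add, sub_smul, one_smul]
      abel
    have hR0 : (C * Q * Cᵀ + R).PosDef :=
      Matrix.PosDef.posSemidef_add (psd_mul_mul_transpose hQ.posSemidef C) hR
    have hstep1 : (R2 - α • R1).PosSemidef := by
      rw [hdiff]; exact psd_smul'_s10 hR0.posSemidef (by linarith)
    have hαR1 : (α • R1).PosDef := pd_smul' hR1 hpos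
    have hinv1 : ((α • R1)⁻¹ - R2⁻¹).PosSemidef := inv_antitone' hαR1 hR2 hstep1
    have hsmulinv : (α • R1)⁻¹ = α⁻¹ • R1⁻¹ := by
      letI : Invertible α := invertibleOfNonzero hα
      rw [Matrix.inv_smul (A := R1) α (isUnit_iff_ne_zero.mpr hR1.det_pos.ne'), invOf_eq_inv α]
    rw [hsmulinv] at hinv1
    have hstep2 : (α⁻¹ • (Fᵀ * R1⁻¹ * F) - Fᵀ * R2⁻¹ * F).PosSemidef := by
      have h := psd_mul_mul_transpose hinv1 Fᵀ
      rw [Matrix.transpose_transpose] at h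
      simpa [Matrix.sub_mul, Matrix.mul_sub, Matrix.smul_mul, Matrix.mul_smul,
        Matrix.mul_assoc] using h
    have hαinvN1 : (α⁻¹ • (Fᵀ * R1⁻¹ * F)).PosDef := pd_smul' hN1 (inv_pos.mpr hpos)
    have hfinal : ((Fᵀ * R2⁻¹ * F)⁻¹ - (α⁻¹ • (Fᵀ * R1⁻¹ * F))⁻¹).PosSemidef :=
      inv_antitone' hN2 hαinvN1 hstep2
    have hsmulinv2 : (α⁻¹ • (Fᵀ * R1⁻¹ * F))⁻¹ = α • (Fᵀ * R1⁻¹ * F)⁻¹ := by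
      letI : Invertible (α⁻¹) := invertibleOfNonzero (inv_ne_zero hα)
      rw [Matrix.inv_smul (A := Fᵀ * R1⁻¹ * F) α⁻¹ (isUnit_iff_ne_zero.mpr hN1.det_pos.ne'),
        invOf_eq_inv α⁻¹, inv_inv]
    rw [hsmulinv2] at hfinal
    rw [rhod, rhod, ← hFdef, ← hR1def, ← hR2def]
    exact hfinal
end
end
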